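/- arXiv:1304.0501 — 6 statements merged into one kernel-verified Lean document; each statement's English description precedes it below -/
import Mathlib

section
/- Let F_q be a finite field, let l, n be positive integers with l ≤ n, and let p : Fin l → Fin n and c : Fin (n−l) → Fin n be strictly increasing maps whose ranges are disjoint and together cover Fin n (p gives the pivot positions and c the non-pivot positions). For A ∈ F_q^{l×(n−l)} let M(A) ∈ F_q^{l×n} be the matrix with M(A)_{s,p(t)} = 1 if s = t and 0 otherwise, and M(A)_{s,c(t)} = A_{s,t}. For A, B ∈ F_q^{l×(n−l)}, let U and V be the row spaces over F_q of M(A) and M(B) respectively. Then dim(U + V) − dim(U ∩ V) = 2·rank(A − B). -/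
/-- **Lifted matrix codes: subspace distance is twice the rank distance.**
`F` is a finite field, `l ≤ n`, `p` enumerates the pivot locations and `c` the
non-pivot locations (both strictly increasing, with disjoint ranges covering `Fin n`).
`MA` (resp. `MB`) is the reduced-row-echelon matrix with identity in the pivot columns
and auxiliary matrix `A` (resp. `B`) in the non-pivot columns; `U`, `V` are their row
spaces.  Then `dim (U ⊔ V) - dim (U ⊓ V) = 2 * rank (A - B)`. -/
theorem lifted_matrix_code_subspace_distance
    {F : Type*} [Field F] [Fintype F] {l n : ℕ} (hl : 0 < l) (hn : 0 < n) (hln : l ≤ n)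
    (p : Fin l → Fin n) (c : Fin (n - l) → Fin n)
    (hp : StrictMono p) (hc : StrictMono c)
    (hdisj : Disjoint (Set.range p) (Set.range c))
    (hcover : Set.range p ∪ Set.range c = Set.univ)
    (A B : Matrix (Fin l) (Fin (n - l)) F)
    (MA MB : Matrix (Fin l) (Fin n) F)
    (hMA1 : ∀ s t, MA s (p t) = if s = t then 1 else 0)
    (hMA2 : ∀ s t, MA s (c t) = A s t)
    (hMB1 : ∀ s t, MB s (p t) = if s = t then 1 else 0)
    (hMB2 : ∀ s t, MB s (c t) = B s t)
    (U V : Submodule F (Fin n → F))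
    (hU : U = Submodule.span F (Set.range fun i => MA i))
    (hV : V = Submodule.span F (Set.range fun i => MB i)) :
    Module.finrank F ↥(U ⊔ V) - Module.finrank F ↥(U ⊓ V) = 2 * (A - B).rank := by
  classical
  set π : (Fin n → F) →ₗ[F] (Fin l → F) := LinearMap.funLeft F F p with hπ
  set ρ : (Fin n → F) →ₗ[F] (Fin (n - l) → F) := LinearMap.funLeft F F c with hρ
  set D : Fin l → (Fin n → F) := fun i => MA i - MB i with hD
  set W : Submodule F (Fin n → F) := Submodule.span F (Set.range D) with hW
  -- pivot-column values of D vanish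
  have hDp : ∀ i t, D i (p t) = 0 := by
    intro i t; simp [hD, hMA1, hMB1]
  have hDc : ∀ i t, D i (c t) = (A - B) i t := by
    intro i t; simp [hD, hMA2, hMB2]
  -- a spanning-set computation: π of a combination of MB rows recovers coefficients
  have hcomb : ∀ (M : Matrix (Fin l) (Fin n) F),
      (∀ s t, M s (p t) = if s = t then 1 else 0) →
      ∀ (g : Fin l → F) (t : Fin l), (∑ i, g i • M i) (p t) = g t := by
    intro M hM g t
    rw [Finset.sum_apply]
    have : ∀ i, (g i • M i) (p t) = if i = t then g i else 0 := by
      intro i; simp [hM, mul_ite]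
    simp_rw [this]
    simp
  -- rows of MA (resp. MB) are linearly independent
  have hindep : ∀ (M : Matrix (Fin l) (Fin n) F),
      (∀ s t, M s (p t) = if s = t then 1 else 0) →
      LinearIndependent F (fun i => M i) := by
    intro M hM
    rw [Fintype.linearIndependent_iff]
    intro g hg t
    have := congrArg (fun v => v (p t)) hg
    simpa [hcomb M hM g t] using this
  have hfU : Module.finrank F U = l := by
    rw [hU, finrank_span_eq_card (hindep MA hMA1), Fintype.card_fin]
  have hfV : Module.finrank F V = l := by
    rw [hV, finrank_span_eq_card (hindep MB hMB1), Fintype.card_fin]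
  -- U ⊔ V = V ⊔ W
  have hUle : U ≤ V ⊔ W := by
    rw [hU, Submodule.span_le, Set.range_subset_iff]
    intro i
    have : MA i = MB i + D i := by simp [hD]
    rw [this]
    exact Submodule.add_mem _
      (Submodule.mem_sup_left (hV ▸ Submodule.subset_span ⟨i, rfl⟩))
      (Submodule.mem_sup_right (Submodule.subset_span ⟨i, rfl⟩))
  have hWle : W ≤ U ⊔ V := by
    rw [hW, Submodule.span_le, Set.range_subset_iff]
    intro i
    exact Submodule.sub_mem _
      (Submodule.mem_sup_left (hU ▸ Submodule.subset_span ⟨i, rfl⟩))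
      (Submodule.mem_sup_right (hV ▸ Submodule.subset_span ⟨i, rfl⟩))
  have hsup : U ⊔ V = V ⊔ W := by
    apply le_antisymm
    · exact sup_le hUle le_sup_left
    · exact sup_le le_sup_right hWle
  -- W lies in the kernel of π
  have hWker : W ≤ LinearMap.ker π := by
    rw [hW, Submodule.span_le, Set.range_subset_iff]
    intro i
    rw [SetLike.mem_coe, LinearMap.mem_ker]
    funext t
    simp [hπ, LinearMap.funLeft_apply, hDp]
  -- V ⊓ W = ⊥
  have hVW : V ⊓ W = ⊥ := by
    rw [Submodule.eq_bot_iff]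
    rintro v ⟨hv, hvW⟩
    have hπv : π v = 0 := hWker hvW
    rw [hV] at hv
    obtain ⟨g, rfl⟩ := Submodule.mem_span_range_iff_exists_fun F |>.mp hv
    have : ∀ t, g t = 0 := by
      intro t
      have := congrFun hπv t
      simpa [hπ, LinearMap.funLeft_apply, hcomb MB hMB1 g t] using this
    simp [funext this]
  have hdisjVW : Disjoint V W := disjoint_iff.mpr hVW
  -- finrank W = rank (A - B)
  have hρD : ∀ i, ρ (D i) = (A - B) i := by
    intro i; funext t; simp [hρ, LinearMap.funLeft_apply, hDc]
  have hmapW : Submodule.map ρ W = Submodule.span F (Set.range (A - B)) := by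
    rw [hW, Submodule.map_span, ← Set.range_comp]
    have : ⇑ρ ∘ D = fun i => (A - B) i := funext hρD
    rw [this]
  have hfW : Module.finrank F W = (A - B).rank := by
    have hinj : Function.Injective (ρ.domRestrict W) := by
      rw [← LinearMap.ker_eq_bot, Submodule.eq_bot_iff]
      rintro ⟨v, hvW⟩ hv
      rw [LinearMap.mem_ker, LinearMap.domRestrict_apply] at hv
      have hπv : π v = 0 := hWker hvW
      have hv0 : v = 0 := by
        funext j
        have hj : j ∈ Set.range p ∪ Set.range c := hcover ▸ Set.mem_univ j
        rcases hj with ⟨t, rfl⟩ | ⟨t, rfl⟩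
        · exact congrFun hπv t
        · exact congrFun hv t
      simp [hv0]
    have := LinearMap.finrank_range_of_inj hinj
    rw [LinearMap.range_domRestrict, hmapW] at this
    rw [← this, Matrix.rank_eq_finrank_span_row]; rfl
  -- dimension computations
  have hdim1 : Module.finrank F ↥(U ⊔ V) = l + (A - B).rank := by
    rw [hsup]
    have := Submodule.finrank_sup_add_finrank_inf_eq V W
    rw [hVW, finrank_bot, add_zero] at this
    rw [this, hfV, hfW]
  have hrle : (A - B).rank ≤ l := by
    simpa using (A - B).rank_le_card_height
  have hdim2 : Module.finrank F ↥(U ⊓ V) = l - (A - B).rank := by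
    have := Submodule.finrank_sup_add_finrank_inf_eq U V
    rw [hdim1, hfU, hfV] at this
    omega
  rw [hdim1, hdim2]
  omega
end

section
/- Let F_q be a finite field with q elements, K a field extension of F_q of degree m, and 1 ≤ l ≤ m. The group LEquiv of linear rank-metric-equivalence maps of K^l is isomorphic to the quotient group (K^× × GL_l(F_q))/N, where N = {(λ, λ^{-1}·I_l) : λ ∈ F_q^×}; explicitly, the map sending the class of (α, L) to the map x ↦ α·(xL) is a group isomorphism from (K^× × GL_l(F_q))/N onto LEquiv. -/
open Matrix
open scoped MatrixGroups

/-- The rank weight of `x ∈ K^l` over `F`. -/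
noncomputable def rankWeight (F : Type*) {K : Type*} [Field F] [Field K] [Algebra F K]
    {l : ℕ} (x : Fin l → K) : ℕ :=
  Module.finrank F ↥(Submodule.span F (Set.range x))

/-- The group (under composition, with maps acting on the right as in the paper) of
linear rank-metric-equivalence maps of `K^l`: invertible `K`-linear maps preserving
rank weight. -/
def LEquivRM (F K : Type*) [Field F] [Field K] [Algebra F K] (l : ℕ) :
    Subgroup ((Fin l → K) ≃ₗ[K] (Fin l → K))ᵐᵒᵖ where
  carrier := {f | ∀ x : Fin l → K, rankWeight F (f.unop x) = rankWeight F x}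
  one_mem' := fun _ => rfl
  mul_mem' := by
    intro a b ha hb x
    have h1 : (a * b).unop x = b.unop (a.unop x) := rfl
    rw [h1, hb, ha]
  inv_mem' := by
    intro a ha x
    have h2 : a.unop (a⁻¹.unop x) = x := a.unop.apply_symm_apply x
    have h3 := ha (a⁻¹.unop x)
    rw [h2] at h3
    exact h3.symm

/-- The homomorphism `F^× → K^× × GL_l(F)`, `λ ↦ (λ, λ⁻¹ • I_l)`. -/
def psiRM (F K : Type*) [Field F] [Field K] [Algebra F K] (l : ℕ) :
    Fˣ →* Kˣ × GL (Fin l) F :=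
  (Units.map (algebraMap F K).toMonoidHom).prod
    ((Units.map (algebraMap F (Matrix (Fin l) (Fin l) F)).toMonoidHom).comp invMonoidHom)

/-- The subgroup `N = {(λ, λ⁻¹ I_l) : λ ∈ F^×} ≤ K^× × GL_l(F)`. -/
def NRM (F K : Type*) [Field F] [Field K] [Algebra F K] (l : ℕ) :
    Subgroup (Kˣ × GL (Fin l) F) :=
  (psiRM F K l).range

instance NRM_normal (F K : Type*) [Field F] [Field K] [Algebra F K] (l : ℕ) :
    (NRM F K l).Normal := by
  constructor
  intro n hn g
  obtain ⟨lam, rfl⟩ := hn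
  have hcomm : psiRM F K l lam * g = g * psiRM F K l lam := by
    apply Prod.ext
    · exact mul_comm _ _
    · apply Units.ext
      show ((psiRM F K l lam).2 : Matrix (Fin l) (Fin l) F) * (g.2 : Matrix (Fin l) (Fin l) F)
        = (g.2 : Matrix (Fin l) (Fin l) F) * ((psiRM F K l lam).2 : Matrix (Fin l) (Fin l) F)
      have : ((psiRM F K l lam).2 : Matrix (Fin l) (Fin l) F)
          = algebraMap F (Matrix (Fin l) (Fin l) F) ((lam⁻¹ : Fˣ) : F) := rfl
      rw [this]
      exact Algebra.commutes _ _
  have : g * psiRM F K l lam * g⁻¹ = psiRM F K l lam := by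
    rw [← hcomm]; group
  rw [this]
  exact ⟨lam, rfl⟩

namespace RMaux
variable {F K : Type*} [Field F] [Field K] [Algebra F K] {l : ℕ}

/-- componentwise embedding of F^l into K^l -/
noncomputable def emb (F : Type*) {K : Type*} [Field F] [Field K] [Algebra F K] {l : ℕ}
    (w : Fin l → F) : Fin l → K := fun i => algebraMap F K (w i)

lemma map_mul_map (A B : Matrix (Fin l) (Fin l) F) :
    (A.map (algebraMap F K)) * (B.map (algebraMap F K)) = (A * B).map (algebraMap F K) :=
  (Matrix.map_mul (f := algebraMap F K)).symm

lemma map_inv_mul (L : GL (Fin l) F) :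
    ((L⁻¹ : GL (Fin l) F) : Matrix (Fin l) (Fin l) F).map (algebraMap F K) *
      ((L : Matrix (Fin l) (Fin l) F)).map (algebraMap F K) = 1 := by
  rw [map_mul_map]
  have : ((L⁻¹ : GL (Fin l) F) : Matrix (Fin l) (Fin l) F) * (L : Matrix (Fin l) (Fin l) F)
      = (1 : Matrix (Fin l) (Fin l) F) := by
    rw [← Units.val_mul, inv_mul_cancel, Units.val_one]
  rw [this, Matrix.map_one _ (map_zero _) (map_one _)]

/-- The underlying linear map `x ↦ α • (x ᵥ* M)`. -/
noncomputable def bl (α : K) (M : Matrix (Fin l) (Fin l) K) :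
    (Fin l → K) →ₗ[K] (Fin l → K) := α • Matrix.vecMulLinear M

lemma bl_apply (α : K) (M : Matrix (Fin l) (Fin l) K) (x : Fin l → K) :
    bl α M x = α • (x ᵥ* M) := rfl

/-- The linear equivalence `x ↦ α • (x · L)`. -/
noncomputable def toLE (α : Kˣ) (L : GL (Fin l) F) : (Fin l → K) ≃ₗ[K] (Fin l → K) :=
  LinearEquiv.ofLinear (bl (α : K) ((L : Matrix (Fin l) (Fin l) F).map (algebraMap F K)))
    (bl ((α⁻¹ : Kˣ) : K) (((L⁻¹ : GL (Fin l) F) : Matrix (Fin l) (Fin l) F).map (algebraMap F K)))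
    (by
      ext x
      simp only [LinearMap.comp_apply, bl_apply, LinearMap.id_apply, Matrix.smul_vecMul,
        smul_smul, Matrix.vecMul_vecMul, map_inv_mul, Matrix.vecMul_one]
      rw [Units.mul_inv, one_smul])
    (by
      ext x
      simp only [LinearMap.comp_apply, bl_apply, LinearMap.id_apply, Matrix.smul_vecMul,
        smul_smul, Matrix.vecMul_vecMul]
      rw [show ((L : Matrix (Fin l) (Fin l) F).map (algebraMap F K)) *
          ((L⁻¹ : GL (Fin l) F) : Matrix (Fin l) (Fin l) F).map (algebraMap F K) = 1 by
            simpa using map_inv_mul (F := F) (K := K) L⁻¹,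
        Matrix.vecMul_one, Units.inv_mul, one_smul])

lemma toLE_apply (α : Kˣ) (L : GL (Fin l) F) (x : Fin l → K) :
    toLE α L x = (α : K) • (x ᵥ* (L : Matrix (Fin l) (Fin l) F).map (algebraMap F K)) := rfl


lemma span_vecMul_le (x : Fin l → K) (A : Matrix (Fin l) (Fin l) F) :
    Submodule.span F (Set.range (x ᵥ* A.map (algebraMap F K)))
      ≤ Submodule.span F (Set.range x) := by
  rw [Submodule.span_le]
  rintro _ ⟨j, rfl⟩
  have : (x ᵥ* A.map (algebraMap F K)) j = ∑ i, A i j • x i := by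
    simp [Matrix.vecMul, dotProduct, Algebra.smul_def, mul_comm]
  rw [this]
  exact Submodule.sum_mem _ fun i _ =>
    Submodule.smul_mem _ _ (Submodule.subset_span ⟨i, rfl⟩)

lemma span_vecMul_GL (x : Fin l → K) (L : GL (Fin l) F) :
    Submodule.span F (Set.range (x ᵥ* (L : Matrix (Fin l) (Fin l) F).map (algebraMap F K)))
      = Submodule.span F (Set.range x) := by
  refine le_antisymm (span_vecMul_le x _) ?_
  have h := span_vecMul_le (x ᵥ* (L : Matrix (Fin l) (Fin l) F).map (algebraMap F K))
    ((L⁻¹ : GL (Fin l) F) : Matrix (Fin l) (Fin l) F)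
  rwa [Matrix.vecMul_vecMul, map_mul_map,
    show (L : Matrix (Fin l) (Fin l) F) * ((L⁻¹ : GL (Fin l) F) : Matrix (Fin l) (Fin l) F)
      = 1 by rw [← Units.val_mul, mul_inv_cancel, Units.val_one],
    Matrix.map_one _ (map_zero _) (map_one _), Matrix.vecMul_one] at h

/-- multiplication by a nonzero scalar of K as F-linear equivalence of K -/
noncomputable def mulE (α : Kˣ) : K ≃ₗ[F] K where
  toFun x := (α : K) * x
  invFun x := ((α⁻¹ : Kˣ) : K) * x
  map_add' := mul_add _
  map_smul' c x := by simp [Algebra.mul_smul_comm]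
  left_inv x := by
    show ((α⁻¹ : Kˣ) : K) * ((α : K) * x) = x
    rw [← mul_assoc, ← Units.val_mul, inv_mul_cancel, Units.val_one, one_mul]
  right_inv x := by
    show (α : K) * (((α⁻¹ : Kˣ) : K) * x) = x
    rw [← mul_assoc, ← Units.val_mul, mul_inv_cancel, Units.val_one, one_mul]

lemma rankWeight_smul (α : Kˣ) (y : Fin l → K) :
    rankWeight F ((α : K) • y) = rankWeight F y := by
  have hr : Set.range ((α : K) • y) = (mulE (F := F) α) '' Set.range y := by
    rw [← Set.range_comp]
    rfl
  unfold rankWeight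
  rw [hr, ← LinearEquiv.coe_toLinearMap, ← Submodule.map_span]
  exact LinearEquiv.finrank_map_eq (mulE α) _

lemma rankWeight_toLE (α : Kˣ) (L : GL (Fin l) F) (x : Fin l → K) :
    rankWeight F (toLE α L x) = rankWeight F x := by
  rw [toLE_apply, rankWeight_smul]
  unfold rankWeight
  rw [span_vecMul_GL]


/-- the monoid hom `(α, L) ↦ op (toLE α L)` -/
noncomputable def Phi (F K : Type*) [Field F] [Field K] [Algebra F K] (l : ℕ) :
    Kˣ × GL (Fin l) F →* ((Fin l → K) ≃ₗ[K] (Fin l → K))ᵐᵒᵖ where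
  toFun p := MulOpposite.op (toLE p.1 p.2)
  map_one' := by
    apply MulOpposite.unop_injective
    apply LinearEquiv.ext
    intro x
    show toLE (1 : Kˣ) (1 : GL (Fin l) F) x = x
    rw [toLE_apply]
    simp [Matrix.map_one _ (map_zero _) (map_one _)]
  map_mul' p q := by
    apply MulOpposite.unop_injective
    show toLE (p.1 * q.1) (p.2 * q.2) = toLE q.1 q.2 * toLE p.1 p.2
    apply LinearEquiv.ext
    intro x
    have : (toLE q.1 q.2 * toLE p.1 p.2) x = toLE q.1 q.2 (toLE p.1 p.2 x) := rfl
    rw [this, toLE_apply, toLE_apply, toLE_apply, Matrix.smul_vecMul, smul_smul,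
      Matrix.vecMul_vecMul, map_mul_map]
    have h2 : ((p.2 * q.2 : GL (Fin l) F) : Matrix (Fin l) (Fin l) F)
        = (p.2 : Matrix (Fin l) (Fin l) F) * (q.2 : Matrix (Fin l) (Fin l) F) := rfl
    rw [h2, Units.val_mul, mul_comm (q.1 : K) (p.1 : K)]

lemma Phi_mem (F K : Type*) [Field F] [Field K] [Algebra F K] (l : ℕ)
    (p : Kˣ × GL (Fin l) F) : Phi F K l p ∈ LEquivRM F K l := by
  intro x
  exact rankWeight_toLE p.1 p.2 x

/-- the corestriction of `Phi` to `LEquivRM` -/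
noncomputable def Phi' (F K : Type*) [Field F] [Field K] [Algebra F K] (l : ℕ) :
    Kˣ × GL (Fin l) F →* LEquivRM F K l :=
  (Phi F K l).codRestrict _ (Phi_mem F K l)

lemma rank_le_one_of (x : Fin l → K) (z : K) (h : ∀ k, ∃ c : F, x k = c • z) :
    rankWeight F x ≤ 1 := by
  have hle : Submodule.span F (Set.range x) ≤ Submodule.span F {z} := by
    rw [Submodule.span_le]
    rintro _ ⟨k, rfl⟩
    obtain ⟨c, hc⟩ := h k
    exact Submodule.mem_span_singleton.mpr ⟨c, hc.symm⟩
  have h2 : Module.finrank F ↥(Submodule.span F {z}) ≤ 1 := by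
    by_cases hz : z = 0
    · subst hz
      rw [Submodule.span_zero_singleton]
      simp
    · rw [finrank_span_singleton hz]
  calc rankWeight F x ≤ Module.finrank F ↥(Submodule.span F {z}) :=
        Submodule.finrank_mono hle
    _ ≤ 1 := h2

lemma rank_one_decomp (x : Fin l → K) (h : rankWeight F x ≤ 1) :
    ∃ (β : K) (w : Fin l → F), x = β • emb F w := by
  have : FiniteDimensional F ↥(Submodule.span F (Set.range x)) :=
    FiniteDimensional.span_of_finite F (Set.finite_range x)
  have hp : (Submodule.span F (Set.range x)).IsPrincipal :=
    (Submodule.finrank_le_one_iff_isPrincipal _).mp h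
  obtain ⟨z, hz⟩ := hp
  have hmem : ∀ k, ∃ c : F, c • z = x k := by
    intro k
    have : x k ∈ Submodule.span F (Set.range x) := Submodule.subset_span ⟨k, rfl⟩
    rw [hz] at this
    exact Submodule.mem_span_singleton.mp this
  choose w hw using hmem
  refine ⟨z, w, ?_⟩
  funext k
  rw [← hw k]
  show w k • z = z * algebraMap F K (w k)
  rw [Algebra.smul_def, mul_comm]

lemma emb_injective : Function.Injective (emb F (K := K) (l := l)) := by
  intro a b hab
  funext k
  exact (algebraMap F K).injective (congrFun hab k)

lemma emb_add (a b : Fin l → F) : emb F (K := K) (a + b) = emb F a + emb F b := by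
  funext k; simp [emb]

lemma emb_smul (c : F) (a : Fin l → F) :
    emb F (K := K) (c • a) = algebraMap F K c • emb F a := by
  funext k; simp [emb, Algebra.smul_def]

lemma emb_vecMul (v : Fin l → F) (A : Matrix (Fin l) (Fin l) F) :
    emb F (K := K) v ᵥ* A.map (algebraMap F K) = emb F (v ᵥ* A) := by
  funext k
  simp [emb, Matrix.vecMul, dotProduct, map_sum]

/-- existence of dual functionals for an independent pair -/
lemma exists_dual (u v : Fin l → F)
    (hind : ∀ s t : F, s • u + t • v = 0 → s = 0 ∧ t = 0) :
    ∃ (φ ψ : (Fin l → F) →ₗ[F] F), φ u = 1 ∧ φ v = 0 ∧ ψ u = 0 ∧ ψ v = 1 := by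
  let T : (Fin 2 → F) →ₗ[F] (Fin l → F) :=
    { toFun := fun y => y 0 • u + y 1 • v
      map_add' := fun y z => by
        simp only [Pi.add_apply, add_smul]
        abel
      map_smul' := fun c y => by
        simp [smul_smul, smul_add] }
  have hker : LinearMap.ker T = ⊥ := by
    rw [LinearMap.ker_eq_bot']
    intro y hy
    obtain ⟨h0, h1⟩ := hind (y 0) (y 1) hy
    funext i
    fin_cases i <;> assumption
  obtain ⟨g, hg⟩ := T.exists_leftInverse_of_injective hker
  have hgu : g u = Pi.single 0 1 := by
    have h1 : T (Pi.single 0 1) = u := by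
      show (Pi.single 0 1 : Fin 2 → F) 0 • u + (Pi.single 0 1 : Fin 2 → F) 1 • v = u
      simp
    have := LinearMap.ext_iff.mp hg (Pi.single 0 1)
    rwa [LinearMap.comp_apply, h1, LinearMap.id_apply] at this
  have hgv : g v = Pi.single 1 1 := by
    have h1 : T (Pi.single 1 1) = v := by
      show (Pi.single 1 1 : Fin 2 → F) 0 • u + (Pi.single 1 1 : Fin 2 → F) 1 • v = v
      simp
    have := LinearMap.ext_iff.mp hg (Pi.single 1 1)
    rwa [LinearMap.comp_apply, h1, LinearMap.id_apply] at this
  refine ⟨(LinearMap.proj 0).comp g, (LinearMap.proj 1).comp g, ?_, ?_, ?_, ?_⟩ <;>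
    simp [hgu, hgv]

/-- extend a functional on F^l to a K-linear functional on K^l -/
noncomputable def ext1 (φ : (Fin l → F) →ₗ[F] F) : (Fin l → K) →ₗ[K] K where
  toFun y := ∑ i, algebraMap F K (φ (Pi.single i 1)) * y i
  map_add' y z := by
    simp [mul_add, Finset.sum_add_distrib]
  map_smul' c y := by
    simp [Finset.mul_sum, mul_left_comm, smul_eq_mul]

lemma ext1_emb (φ : (Fin l → F) →ₗ[F] F) (w : Fin l → F) :
    ext1 (K := K) φ (emb F w) = algebraMap F K (φ w) := by
  show ∑ i, algebraMap F K (φ (Pi.single i 1)) * algebraMap F K (w i) = _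
  have hw : φ w = ∑ i, w i * φ (Pi.single i 1) := by
    conv_lhs => rw [← Finset.univ_sum_single w]
    rw [map_sum]
    congr 1
    funext i
    have hsing : (Pi.single i (w i) : Fin l → F) = w i • (Pi.single i (1:F) : Fin l → F) := by
      funext k
      by_cases hk : k = i
      · subst hk; simp
      · simp [Pi.single_apply, hk]
    rw [hsing, _root_.map_smul, smul_eq_mul]
  rw [hw, map_sum]
  congr 1
  funext i
  rw [_root_.map_mul, mul_comm]

lemma emb_zero : emb F (K := K) (0 : Fin l → F) = 0 := by
  funext k; simp [emb]

lemma exists_form (hl : 0 < l) (f : (Fin l → K) ≃ₗ[K] (Fin l → K))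
    (hf : ∀ x, rankWeight F (f x) = rankWeight F x) :
    ∃ (α : Kˣ) (L : GL (Fin l) F), ∀ x, f x = toLE α L x := by
  classical
  have hφinj : ∀ a : F, algebraMap F K a = 0 → a = 0 := fun a ha =>
    (algebraMap F K).injective (by rw [ha, map_zero])
  set eK : Fin l → (Fin l → K) := fun i => Pi.single i 1 with heK
  have hrank1 : ∀ i, rankWeight F (f (eK i)) ≤ 1 := by
    intro i
    rw [hf]
    apply rank_le_one_of _ (1 : K)
    intro k
    by_cases hk : k = i
    · exact ⟨1, by subst hk; simp [eK]⟩
    · exact ⟨0, by simp [eK, Pi.single_apply, hk]⟩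
  choose β w hβw using fun i => rank_one_decomp _ (hrank1 i)
  have hne : ∀ i, f (eK i) ≠ 0 := by
    intro i hi
    have h0 : eK i = 0 := by
      apply f.injective; rw [hi, map_zero]
    have := congrFun h0 i
    simp [eK] at this
  have hβ : ∀ i, β i ≠ 0 := by
    intro i h0
    apply hne i; rw [hβw i, h0, zero_smul]
  have hwne : ∀ i, w i ≠ 0 := by
    intro i h0
    apply hne i
    rw [hβw i, h0, emb_zero, smul_zero]
  set i₀ : Fin l := ⟨0, hl⟩ with hi₀
  have hc : ∀ j, ∃ c : F, β j = β i₀ * algebraMap F K c := by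
    intro j
    by_cases hj : j = i₀
    · exact ⟨1, by rw [hj]; simp⟩
    · have hind : ∀ s t : F, s • w i₀ + t • w j = 0 → s = 0 ∧ t = 0 := by
        intro s t hst
        have h1 : f ((algebraMap F K s * (β i₀)⁻¹) • eK i₀
            + (algebraMap F K t * (β j)⁻¹) • eK j) = 0 := by
          rw [map_add, _root_.map_smul, _root_.map_smul, hβw i₀, hβw j, smul_smul, smul_smul,
            mul_assoc, inv_mul_cancel₀ (hβ i₀), mul_one, mul_assoc,
            inv_mul_cancel₀ (hβ j), mul_one, ← emb_smul, ← emb_smul, ← emb_add, hst,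
            emb_zero]
        have h2 : (algebraMap F K s * (β i₀)⁻¹) • eK i₀
            + (algebraMap F K t * (β j)⁻¹) • eK j = 0 := by
          apply f.injective; rw [h1, map_zero]
        constructor
        · have h3 := congrFun h2 i₀
          have h4 : algebraMap F K s * (β i₀)⁻¹ = 0 := by
            simpa [eK, Pi.single_apply, hj] using h3
          rcases mul_eq_zero.mp h4 with h | h
          · exact hφinj _ h
          · exact absurd h (inv_ne_zero (hβ i₀))
        · have h3 := congrFun h2 j
          have h4 : algebraMap F K t * (β j)⁻¹ = 0 := by
            simpa [eK, Pi.single_apply, hj] using h3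
          rcases mul_eq_zero.mp h4 with h | h
          · exact hφinj _ h
          · exact absurd h (inv_ne_zero (hβ j))
      have hr2 : rankWeight F (f (eK i₀ + eK j)) ≤ 1 := by
        rw [hf]
        apply rank_le_one_of _ (1 : K)
        intro k
        refine ⟨(if k = i₀ then 1 else 0) + (if k = j then 1 else 0), ?_⟩
        simp only [eK, Pi.add_apply, Pi.single_apply, Algebra.smul_def, map_add,
          apply_ite (algebraMap F K), _root_.map_one, _root_.map_zero, mul_one]
      obtain ⟨γ, z, hγz⟩ := rank_one_decomp _ hr2
      obtain ⟨φd, ψd, hφu, hφv, hψu, hψv⟩ := exists_dual (w i₀) (w j) hind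
      have heq : β i₀ • emb F (K := K) (w i₀) + β j • emb F (K := K) (w j) = γ • emb F (K := K) z := by
        rw [← hβw i₀, ← hβw j, ← map_add f]
        exact hγz
      have h1 : β i₀ = γ * algebraMap F K (φd z) := by
        have := congrArg (ext1 (K := K) φd) heq
        simpa [map_add, _root_.map_smul, ext1_emb, hφu, hφv, smul_eq_mul] using this
      have h2 : β j = γ * algebraMap F K (ψd z) := by
        have := congrArg (ext1 (K := K) ψd) heq
        simpa [map_add, _root_.map_smul, ext1_emb, hψu, hψv, smul_eq_mul] using this
      have hφz : algebraMap F K (φd z) ≠ 0 := fun h => hβ i₀ (by rw [h1, h, mul_zero])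
      refine ⟨ψd z / φd z, ?_⟩
      have hγval : γ = β i₀ / algebraMap F K (φd z) := by
        rw [eq_div_iff hφz]; exact h1.symm
      rw [h2, hγval, map_div₀]
      field_simp
  choose c hcspec using hc
  set A : Matrix (Fin l) (Fin l) F := Matrix.of (fun j k => c j * w j k) with hA
  have hrow : ∀ j, f (eK j) = β i₀ • (eK j ᵥ* A.map (algebraMap F K)) := by
    intro j
    rw [hβw j, hcspec j]
    have hvm : (eK j) ᵥ* A.map (algebraMap F K)
        = fun k => algebraMap F K (c j * w j k) := by
      rw [show eK j = Pi.single j (1:K) from rfl, Matrix.single_vecMul]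
      funext k
      simp [hA, Matrix.map_apply]
    rw [hvm]
    funext k
    show (β i₀ * algebraMap F K (c j)) * algebraMap F K (w j k)
      = β i₀ * algebraMap F K (c j * w j k)
    rw [_root_.map_mul, mul_assoc]
  have hlin : ∀ x, f x = β i₀ • (x ᵥ* A.map (algebraMap F K)) := by
    have hBe : f.toLinearMap = bl (β i₀) (A.map (algebraMap F K)) := by
      apply Module.Basis.ext (Pi.basisFun K (Fin l))
      intro j
      rw [Pi.basisFun_apply]
      exact hrow j
    intro x
    have := LinearMap.ext_iff.mp hBe x
    exact this
  have hAunit : IsUnit A := by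
    rw [Matrix.isUnit_iff_isUnit_det, isUnit_iff_ne_zero]
    intro hdet
    have hdetT : Aᵀ.det = 0 := by rw [Matrix.det_transpose]; exact hdet
    obtain ⟨v, hv0, hv⟩ := Matrix.exists_mulVec_eq_zero_iff.mpr hdetT
    have hvm : v ᵥ* A = 0 := by
      rw [← Matrix.mulVec_transpose]; exact hv
    have hfv : f (emb F v) = 0 := by
      rw [hlin, emb_vecMul, hvm, emb_zero, smul_zero]
    have hev : emb F (K := K) v = 0 := by
      apply f.injective; rw [hfv, map_zero]
    exact hv0 (emb_injective (by rw [hev, ← emb_zero (F := F) (K := K) (l := l)]))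
  refine ⟨Units.mk0 (β i₀) (hβ i₀), hAunit.unit, ?_⟩
  intro x
  rw [hlin x, toLE_apply]
  have hu : ((hAunit.unit : GL (Fin l) F) : Matrix (Fin l) (Fin l) F) = A := hAunit.unit_spec
  rw [hu]
  rfl

lemma Phi'_ker (hl : 0 < l) : (Phi' F K l).ker = NRM F K l := by
  classical
  apply le_antisymm
  · -- ker ⊆ NRM
    intro p hp
    rw [MonoidHom.mem_ker] at hp
    have hp1 : Phi F K l p = 1 := congrArg Subtype.val hp
    have hp2 : toLE p.1 p.2 = 1 := MulOpposite.op_injective hp1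
    have hrow : ∀ j k : Fin l, (p.1 : K) * (1 * algebraMap F K ((p.2 : Matrix (Fin l) (Fin l) F) j k))
        = (Pi.single j (1 : K) : Fin l → K) k := by
      intro j k
      have := LinearEquiv.ext_iff.mp hp2 (Pi.single j (1 : K))
      have h2 : toLE p.1 p.2 (Pi.single j (1:K)) = Pi.single j (1:K) := this
      rw [toLE_apply, Matrix.single_vecMul] at h2
      have := congrFun h2 k
      simpa [Matrix.map_apply] using this
    have hdiag : ∀ j, (p.1 : K) * algebraMap F K ((p.2 : Matrix (Fin l) (Fin l) F) j j) = 1 := by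
      intro j
      have := hrow j j
      simpa using this
    have hoff : ∀ j k, j ≠ k → (p.2 : Matrix (Fin l) (Fin l) F) j k = 0 := by
      intro j k hjk
      have h := hrow j k
      rw [one_mul, Pi.single_apply, if_neg (fun h' => hjk h'.symm)] at h
      rcases mul_eq_zero.mp h with h' | h'
      · exact absurd h' p.1.ne_zero
      · exact (algebraMap F K).injective (by rw [h', map_zero])
    set i₀ : Fin l := ⟨0, hl⟩
    have hd0 : (p.2 : Matrix (Fin l) (Fin l) F) i₀ i₀ ≠ 0 := by
      intro h0
      have := hdiag i₀
      rw [h0, map_zero, mul_zero] at this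
      exact zero_ne_one this
    refine ⟨Units.mk0 ((p.2 : Matrix (Fin l) (Fin l) F) i₀ i₀)⁻¹ (inv_ne_zero hd0), ?_⟩
    have hdeq : ∀ j, (p.2 : Matrix (Fin l) (Fin l) F) j j = (p.2 : Matrix (Fin l) (Fin l) F) i₀ i₀ := by
      intro j
      apply (algebraMap F K).injective
      have e1 := eq_inv_of_mul_eq_one_right (hdiag j)
      have e2 := eq_inv_of_mul_eq_one_right (hdiag i₀)
      exact e1.trans e2.symm
    apply Prod.ext
    · apply Units.ext
      show algebraMap F K ((p.2 : Matrix (Fin l) (Fin l) F) i₀ i₀)⁻¹ = (p.1 : K)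
      rw [map_inv₀, eq_inv_of_mul_eq_one_right (hdiag i₀), inv_inv]
    · apply Units.ext
      show algebraMap F (Matrix (Fin l) (Fin l) F) ((Units.mk0 _ (inv_ne_zero hd0))⁻¹ : Fˣ)
        = (p.2 : Matrix (Fin l) (Fin l) F)
      have hval : (((Units.mk0 ((p.2 : Matrix (Fin l) (Fin l) F) i₀ i₀)⁻¹ (inv_ne_zero hd0))⁻¹ : Fˣ) : F)
          = (p.2 : Matrix (Fin l) (Fin l) F) i₀ i₀ := by
        simp
      rw [hval]
      apply Matrix.ext
      intro j k
      rw [Matrix.algebraMap_matrix_apply]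
      by_cases hjk : j = k
      · subst hjk
        rw [if_pos rfl, hdeq j]
        exact Algebra.algebraMap_self_apply _
      · rw [if_neg hjk, hoff j k hjk]
  · -- NRM ⊆ ker
    rintro p ⟨lam, rfl⟩
    rw [MonoidHom.mem_ker]
    apply Subtype.ext
    show Phi F K l (psiRM F K l lam) = 1
    apply MulOpposite.unop_injective
    apply LinearEquiv.ext
    intro x
    show toLE (psiRM F K l lam).1 (psiRM F K l lam).2 x = x
    rw [toLE_apply]
    have h1 : (((psiRM F K l lam).1 : Kˣ) : K) = algebraMap F K (lam : F) := rfl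
    have h2 : (((psiRM F K l lam).2 : GL (Fin l) F) : Matrix (Fin l) (Fin l) F)
        = algebraMap F (Matrix (Fin l) (Fin l) F) ((lam⁻¹ : Fˣ) : F) := rfl
    rw [h1, h2, Matrix.algebraMap_eq_diagonal, Matrix.diagonal_map (map_zero _)]
    funext k
    rw [Pi.smul_apply, Matrix.vecMul_diagonal, smul_eq_mul]
    show algebraMap F K (lam : F) * (x k * algebraMap F K (algebraMap F (Fin l → F) ((lam⁻¹ : Fˣ) : F) k)) = x k
    have h3 : (algebraMap F (Fin l → F) ((lam⁻¹ : Fˣ) : F)) k = ((lam⁻¹ : Fˣ) : F) := rfl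
    rw [h3, mul_comm (x k), ← mul_assoc, ← _root_.map_mul]
    rw [show (lam : F) * ((lam⁻¹ : Fˣ) : F) = 1 by rw [← Units.val_mul, mul_inv_cancel, Units.val_one]]
    rw [_root_.map_one, one_mul]

lemma Phi'_surjective (hl : 0 < l) : Function.Surjective (Phi' F K l) := by
  rintro ⟨fop, hfop⟩
  obtain ⟨α, L, h⟩ := exists_form hl fop.unop hfop
  refine ⟨(α, L), ?_⟩
  apply Subtype.ext
  show Phi F K l (α, L) = fop
  apply MulOpposite.unop_injective
  exact (LinearEquiv.ext h).symm

end RMaux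

/-- **Structure of the group of linear rank-metric-equivalence maps (Prop. 3.1).**
`LEquiv(K^l) ≅ (K^× × GL_l(F))/N` where `N = {(λ, λ⁻¹ I_l) : λ ∈ F^×}`; explicitly the
class of `(α, L)` corresponds to the map `x ↦ α • (x · L)`. -/
theorem lequiv_rank_metric_iso
    (F K : Type*) [Field F] [Fintype F] [Field K] [Algebra F K]
    (m l : ℕ) (hm : Module.finrank F K = m) (hl : 1 ≤ l) (hlm : l ≤ m) :
    ∃ e : ((Kˣ × GL (Fin l) F) ⧸ NRM F K l) ≃* (LEquivRM F K l),
      ∀ (α : Kˣ) (L : GL (Fin l) F) (x : Fin l → K),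
        ((e (QuotientGroup.mk (α, L)) : ((Fin l → K) ≃ₗ[K] (Fin l → K))ᵐᵒᵖ)).unop x
          = (α : K) • Matrix.vecMul x ((L : Matrix (Fin l) (Fin l) F).map (algebraMap F K)) := by
  have hl' : 0 < l := hl
  have hker : (RMaux.Phi' F K l).ker = NRM F K l := RMaux.Phi'_ker hl'
  refine ⟨(QuotientGroup.quotientMulEquivOfEq hker.symm).trans
    (QuotientGroup.quotientKerEquivOfSurjective _ (RMaux.Phi'_surjective hl')), ?_⟩
  intro α L x
  rfl
end

section
/- Let F_q be a finite field of characteristic p with q elements, K a field extension of F_q of degree m, and 1 ≤ l ≤ m. Let SLEquiv denote the group (under composition) of invertible semi-linear maps f : K^l → K^l that preserve rank weight, let LEquiv ≤ SLEquiv be the subgroup of invertible K-linear rank-weight-preserving maps, and let G ≤ SLEquiv be the subgroup of coordinatewise Galois maps {x ↦ (γ(x_1),…,γ(x_l)) : γ ∈ Gal(K/F_p)}. Then LEquiv is normal in SLEquiv, LEquiv ∩ G is trivial, and SLEquiv = LEquiv·G; that is, SLEquiv is the internal semidirect product LEquiv ⋊ Gal(K/F_p). -/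
/-- `f` is a semi-linear rank-metric-equivalence map: an additive automorphism of `K^l`
which is semi-linear for some `γ ∈ Gal(K/F_p)` and preserves rank weight. -/
def IsSemilinearRMEquiv (F : Type*) {K : Type*} [Field F] [Field K] [Algebra F K]
    {l : ℕ} (f : AddAut (Fin l → K)) : Prop :=
  (∃ γ : K ≃+* K, ∀ (c : K) (x : Fin l → K), f (c • x) = γ c • f x) ∧
  ∀ x : Fin l → K, rankWeight F (f x) = rankWeight F x

/-- `f` is a linear rank-metric-equivalence map: an additive automorphism of `K^l`
which is `K`-linear and preserves rank weight. -/
def IsLinearRMEquiv (F : Type*) {K : Type*} [Field F] [Field K] [Algebra F K]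
    {l : ℕ} (f : AddAut (Fin l → K)) : Prop :=
  (∀ (c : K) (x : Fin l → K), f (c • x) = c • f x) ∧
  ∀ x : Fin l → K, rankWeight F (f x) = rankWeight F x

/-- `f` is the coordinatewise application of some `γ ∈ Gal(K/F_p)`. -/
def IsGaloisRMMap {K : Type*} [Field K] {l : ℕ} (f : AddAut (Fin l → K)) : Prop :=
  ∃ γ : K ≃+* K, ∀ (x : Fin l → K) (i : Fin l), f x i = γ (x i)

open Polynomial in
lemma exists_fixed (F : Type*) {K : Type*} [Field F] [Field K] [Algebra F K]
    [Fintype F] [Fintype K] (γ : K ≃+* K) (a : F) :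
    ∃ b : F, γ (algebraMap F K a) = algebraMap F K b := by
  classical
  have hq1 : 1 < Fintype.card F := Fintype.one_lt_card
  set P : K[X] := X ^ Fintype.card F - X with hP
  have hdeg : P.natDegree = Fintype.card F := by
    rw [hP]
    rw [Polynomial.natDegree_sub_eq_left_of_natDegree_lt] <;>
      simp [Polynomial.natDegree_X_pow, hq1]
  have hP0 : P ≠ 0 := by
    intro h
    rw [h, Polynomial.natDegree_zero] at hdeg
    omega
  set A : Finset K := Finset.univ.image (algebraMap F K) with hA
  set B : Finset K := Finset.univ.filter (fun z : K => z ^ Fintype.card F = z) with hB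
  have hAB : A ⊆ B := by
    intro z hz
    rw [hA, Finset.mem_image] at hz
    obtain ⟨c, -, rfl⟩ := hz
    simp only [hB, Finset.mem_filter, Finset.mem_univ, true_and]
    rw [← map_pow, FiniteField.pow_card]
  have hcardA : A.card = Fintype.card F := by
    rw [hA, Finset.card_image_of_injective _ (algebraMap F K).injective, Finset.card_univ]
  have hcardB : B.card ≤ Fintype.card F := by
    have hBR : B ⊆ P.roots.toFinset := by
      intro z hz
      rw [hB, Finset.mem_filter] at hz
      rw [Multiset.mem_toFinset, Polynomial.mem_roots']
      refine ⟨hP0, ?_⟩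
      simp [Polynomial.IsRoot, hP, hz.2]
    calc B.card ≤ P.roots.toFinset.card := Finset.card_le_card hBR
      _ ≤ Multiset.card P.roots := Multiset.toFinset_card_le _
      _ ≤ P.natDegree := P.card_roots'
      _ = Fintype.card F := hdeg
  have hBA : A = B := Finset.eq_of_subset_of_card_le hAB (by rw [hcardA]; exact hcardB)
  have hmem : γ (algebraMap F K a) ∈ B := by
    simp only [hB, Finset.mem_filter, Finset.mem_univ, true_and]
    rw [← map_pow, ← map_pow, FiniteField.pow_card]
  rw [← hBA, hA, Finset.mem_image] at hmem
  obtain ⟨b, -, hb⟩ := hmem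
  exact ⟨b, hb.symm⟩

lemma mem_span_map (F : Type*) {K : Type*} [Field F] [Field K] [Algebra F K]
    [Fintype F] [Fintype K] {l : ℕ} (γ : K ≃+* K) (x : Fin l → K) {v : K}
    (hv : v ∈ Submodule.span F (Set.range x)) :
    γ v ∈ Submodule.span F (Set.range (fun i => γ (x i))) := by
  induction hv using Submodule.span_induction with
  | mem y hy => obtain ⟨i, rfl⟩ := hy; exact Submodule.subset_span ⟨i, rfl⟩
  | zero => simp
  | add y z _ _ hy hz => rw [map_add]; exact Submodule.add_mem _ hy hz
  | smul a y _ hy =>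
      obtain ⟨b, hb⟩ := exists_fixed F γ a
      rw [Algebra.smul_def, map_mul, hb, ← Algebra.smul_def]
      exact Submodule.smul_mem _ _ hy

lemma rankWeight_galois (F : Type*) {K : Type*} [Field F] [Field K] [Algebra F K]
    [Fintype F] [Fintype K] {l : ℕ} (γ : K ≃+* K) (x : Fin l → K) :
    rankWeight F (fun i => γ (x i)) = rankWeight F x := by
  classical
  set S := Submodule.span F (Set.range x) with hS
  set T := Submodule.span F (Set.range (fun i => γ (x i))) with hT
  have e : T ≃ S := by
    refine ⟨fun w => ⟨γ.symm w.1, ?_⟩, fun v => ⟨γ v.1, mem_span_map F γ x v.2⟩, ?_, ?_⟩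
    · have := mem_span_map F γ.symm (fun i => γ (x i)) w.2
      simpa using this
    · intro w; ext; simp
    · intro v; ext; simp
  have hft : Fintype ↥T := Fintype.ofFinite _
  have hfs : Fintype ↥S := Fintype.ofFinite _
  have hcard : Fintype.card ↥T = Fintype.card ↥S := Fintype.card_congr e
  rw [Module.card_eq_pow_finrank (K := F) (V := ↥T), Module.card_eq_pow_finrank (K := F) (V := ↥S)] at hcard
  exact Nat.pow_right_injective Fintype.one_lt_card hcard

/-- **`SLEquiv` is the internal semidirect product `LEquiv ⋊ Gal(K/F_p)`.**
Within the group of semi-linear rank-metric-equivalence maps of `K^l`: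
the linear ones form a normal subgroup, the coordinatewise Galois maps intersect it
trivially, and every semi-linear rank-metric-equivalence map factors as a linear one
followed by a Galois one. -/
theorem slequiv_rank_metric_semidirect
    (F K : Type*) [Field F] [Fintype F] [Field K] [Fintype K] [Algebra F K]
    (p : ℕ) [Fact p.Prime] [CharP F p] [CharP K p]
    (m l : ℕ) (hm : Module.finrank F K = m) (hl : 1 ≤ l) (hlm : l ≤ m) :
    (∀ g n : AddAut (Fin l → K), IsSemilinearRMEquiv F g → IsLinearRMEquiv F n →
        IsLinearRMEquiv F (g + n + -g)) ∧
    (∀ f : AddAut (Fin l → K), IsLinearRMEquiv F f → IsGaloisRMMap f → f = 0) ∧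
    (∀ f : AddAut (Fin l → K), IsSemilinearRMEquiv F f →
        ∃ a b : AddAut (Fin l → K), IsLinearRMEquiv F a ∧ IsGaloisRMMap b ∧ f = a + b) := by
  classical
  refine ⟨?_, ?_, ?_⟩
  · rintro g n ⟨⟨γ, hγ⟩, hgw⟩ ⟨hnl, hnw⟩
    have hginv : ∀ (c : K) (x : Fin l → K), (-g) (c • x) = γ.symm c • (-g) x := by
      intro c x
      apply g.injective
      rw [hγ]
      simp [AddAut.neg_def]
    constructor
    · intro c x
      show g (n ((-g) (c • x))) = c • g (n ((-g) x))
      rw [hginv, hnl, hγ]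
      simp
    · intro x
      show rankWeight F (g (n ((-g) x))) = rankWeight F x
      rw [hgw, hnw]
      have h := hgw ((-g) x)
      simp only [AddAut.neg_def] at h ⊢
      rw [AddEquiv.apply_symm_apply] at h
      exact h.symm
  · rintro f ⟨hfl, -⟩ ⟨γ, hγ⟩
    have hγid : ∀ c : K, γ c = c := by
      intro c
      have h2 := congrFun (hfl c (fun _ => 1)) ⟨0, hl⟩
      simpa [hγ] using h2
    have hfx : ∀ x, f x = x := fun x => funext fun i => by rw [hγ x i, hγid]
    exact AddEquiv.ext fun x => by rw [hfx]; rfl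
  · rintro f ⟨⟨γ, hγ⟩, hw⟩
    set b : AddAut (Fin l → K) := AddEquiv.piCongrRight (fun _ => γ.toAddEquiv) with hbdef
    have hb : ∀ (x : Fin l → K) (i : Fin l), b x i = γ (x i) := fun x i => rfl
    have hbinv : ∀ (x : Fin l → K) (i : Fin l), (-b) x i = γ.symm (x i) := fun x i => rfl
    refine ⟨f + -b, b, ⟨?_, ?_⟩, ⟨γ, hb⟩, (neg_add_cancel_right f b).symm⟩
    · intro c x
      show f ((-b) (c • x)) = c • f ((-b) x)
      have hs : (-b) (c • x) = γ.symm c • (-b) x := by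
        funext i
        rw [hbinv, Pi.smul_apply, Pi.smul_apply, hbinv]
        simp
      rw [hs, hγ]
      simp
    · intro x
      show rankWeight F (f ((-b) x)) = rankWeight F x
      rw [hw]
      have hs : (-b) x = fun i => γ.symm (x i) := funext fun i => hbinv x i
      rw [hs, rankWeight_galois]
end

section
/- Let F_q be a finite field and l, m positive integers. Let f : F_q^{l×m} → F_q^{l×m} be an invertible F_q-linear map satisfying rank(f(A)) = rank(A) for every A ∈ F_q^{l×m}. Then there exist L ∈ GL_l(F_q) and M ∈ GL_m(F_q) such that either f(A) = L·A·M for all A ∈ F_q^{l×m}, or f(A) = L·A^T·M for all A ∈ F_q^{l×m}, where the latter case can only occur if l = m. -/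
open scoped MatrixGroups
open Matrix

namespace RankPres

variable {F : Type*} [Field F]

/-- Two vectors are "dependent": one is a scalar multiple of the other. -/
def Dep {n : ℕ} (u v : Fin n → F) : Prop := ∃ c : F, v = c • u ∨ u = c • v

lemma dep_symm {n : ℕ} {u v : Fin n → F} (h : Dep u v) : Dep v u := by
  obtain ⟨c, h | h⟩ := h
  exacts [⟨c, Or.inr h⟩, ⟨c, Or.inl h⟩]

lemma dep_zero_left {n : ℕ} (v : Fin n → F) : Dep (0 : Fin n → F) v := ⟨0, Or.inr (by simp)⟩

lemma dep_zero_right {n : ℕ} (v : Fin n → F) : Dep v (0 : Fin n → F) := ⟨0, Or.inl (by simp)⟩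

lemma not_dep.left_ne {n : ℕ} {u v : Fin n → F} (h : ¬ Dep u v) : u ≠ 0 :=
  fun h0 => h (h0 ▸ dep_zero_left v)

lemma not_dep.right_ne {n : ℕ} {u v : Fin n → F} (h : ¬ Dep u v) : v ≠ 0 :=
  fun h0 => h (h0 ▸ dep_zero_right u)

/-- A dependence with a nonzero base vector can be written one-sidedly. -/
lemma Dep.resolve {n : ℕ} {u v : Fin n → F} (h : Dep u v) (hu : u ≠ 0) :
    ∃ c : F, v = c • u := by
  obtain ⟨c, h | h⟩ := h
  · exact ⟨c, h⟩
  · rcases eq_or_ne c 0 with rfl | hc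
    · simp at h; exact absurd h hu
    · exact ⟨c⁻¹, by rw [h]; ext i; simp [hc]⟩

lemma dep_trans {n : ℕ} {u v w : Fin n → F} (hv : v ≠ 0) (h1 : Dep v u) (h2 : Dep v w) :
    Dep u w := by
  obtain ⟨c, rfl⟩ := h1.resolve hv
  obtain ⟨d, rfl⟩ := h2.resolve hv
  rcases eq_or_ne c 0 with rfl | hc
  · exact ⟨0, Or.inr (by simp)⟩
  · exact ⟨d / c, Or.inl (by rw [smul_smul, div_mul_cancel₀ _ hc])⟩

lemma not_dep_coeffs {n : ℕ} {u v : Fin n → F} (h : ¬ Dep u v) {a b : F}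
    (hab : a • u + b • v = 0) : a = 0 ∧ b = 0 := by
  rcases eq_or_ne a 0 with rfl | ha
  · simp only [zero_smul, zero_add, smul_eq_zero] at hab
    rcases hab with rfl | hv
    · exact ⟨rfl, rfl⟩
    · exact absurd (hv ▸ dep_zero_right u) h
  · exfalso
    apply h
    refine ⟨-(b/a), Or.inr ?_⟩
    have h1 : a • u = -(b • v) := by linear_combination (norm := module) hab
    ext i
    have h2 := congrFun h1 i
    simp only [Pi.smul_apply, smul_eq_mul, Pi.neg_apply] at h2 ⊢
    field_simp
    linear_combination h2

lemma exists_ne_zero_coord {n : ℕ} {u : Fin n → F} (hu : u ≠ 0) : ∃ i, u i ≠ 0 := by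
  by_contra h
  push_neg at h
  exact hu (funext fun i => by simpa using h i)

lemma not_dep_single {n : ℕ} {i j : Fin n} (hij : i ≠ j) :
    ¬ Dep (Pi.single i (1 : F)) (Pi.single j (1 : F)) := by
  rintro ⟨c, h | h⟩
  · have h1 := congrFun h i
    simp [Pi.single_apply, hij.symm] at h1
    subst h1
    have := congrFun h j
    simp at this
  · have h1 := congrFun h j
    simp [Pi.single_apply, hij] at h1
    subst h1
    have := congrFun h i
    simp at this

lemma not_dep_add_right {n : ℕ} {u v : Fin n → F} (h : ¬ Dep u v) : ¬ Dep u (u + v) := by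
  rintro ⟨c, hc | hc⟩
  · exact h ⟨c - 1, Or.inl (by linear_combination (norm := module) hc)⟩
  · rcases eq_or_ne c 0 with rfl | hc0
    · simp at hc; exact not_dep.left_ne h hc
    · apply h
      refine ⟨(1 - c)/c, Or.inl ?_⟩
      have : v = c⁻¹ • u - u := by
        rw [eq_sub_iff_add_eq]
        have := congrArg (fun w => (c⁻¹ : F) • w) hc
        simpa [smul_smul, inv_mul_cancel₀ hc0, add_comm] using this.symm
      rw [this]
      ext i
      simp only [Pi.smul_apply, Pi.sub_apply, smul_eq_mul]
      field_simp

lemma not_dep_add_left {n : ℕ} {u v : Fin n → F} (h : ¬ Dep u v) : ¬ Dep v (u + v) := by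
  have := not_dep_add_right (fun hd => h (dep_symm hd))
  rwa [add_comm] at this

/-- in dimension ≥ 2, there is a vector independent from any given one -/
lemma exists_not_dep {n : ℕ} (hn : 2 ≤ n) {v : Fin n → F} (hv : v ≠ 0) :
    ∃ w, ¬ Dep v w := by
  obtain ⟨i, hi⟩ := exists_ne_zero_coord hv
  obtain ⟨j, hj⟩ := Fintype.exists_ne_of_one_lt_card (by rw [Fintype.card_fin]; omega) i
  refine ⟨Pi.single j 1, ?_⟩
  rintro ⟨c, h | h⟩
  · have h1 := congrFun h i
    simp [Pi.single_apply, Ne.symm hj] at h1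
    rcases h1 with rfl | h1
    · have := congrFun h j; simp at this
    · exact hi h1
  · have := congrFun h i
    simp [Pi.single_apply, Ne.symm hj] at this
    exact hi this



lemma vecMulVec_eq_zero_iff {a b : ℕ} {u : Fin a → F} {v : Fin b → F} :
    vecMulVec u v = 0 ↔ u = 0 ∨ v = 0 := by
  constructor
  · intro h
    by_contra hc
    push_neg at hc
    obtain ⟨i, hi⟩ : ∃ i, u i ≠ 0 := by
      by_contra h'; push_neg at h'; exact hc.1 (funext fun i => by simpa using h' i)
    obtain ⟨j, hj⟩ : ∃ j, v j ≠ 0 := by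
      by_contra h'; push_neg at h'; exact hc.2 (funext fun j => by simpa using h' j)
    have := congrFun (congrFun h i) j
    rw [vecMulVec_apply] at this
    simp only [Matrix.zero_apply] at this
    exact (mul_ne_zero hi hj) this
  · rintro (rfl | rfl) <;> ext i j <;> simp [vecMulVec_apply]

lemma vecMulVec_smul_left {a b : ℕ} (c : F) (u : Fin a → F) (v : Fin b → F) :
    vecMulVec (c • u) v = c • vecMulVec u v := by
  ext i j; simp [vecMulVec_apply, mul_assoc]

lemma vecMulVec_smul_right {a b : ℕ} (c : F) (u : Fin a → F) (v : Fin b → F) :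
    vecMulVec u (c • v) = c • vecMulVec u v := by
  ext i j; simp [vecMulVec_apply]; ring

lemma vecMulVec_add_left {a b : ℕ} (u u' : Fin a → F) (v : Fin b → F) :
    vecMulVec (u + u') v = vecMulVec u v + vecMulVec u' v := by
  ext i j; simp [vecMulVec_apply]; ring

lemma vecMulVec_add_right {a b : ℕ} (u : Fin a → F) (v v' : Fin b → F) :
    vecMulVec u (v + v') = vecMulVec u v + vecMulVec u v' := by
  ext i j; simp [vecMulVec_apply]; ring

lemma vecMulVec_transpose {a b : ℕ} (u : Fin a → F) (v : Fin b → F) :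
    (vecMulVec u v)ᵀ = vecMulVec v u := by
  ext i j; simp [vecMulVec_apply, transpose_apply, mul_comm]

/-- left-cancellation : reading off the row from a nonzero column -/
lemma vecMulVec_left_cancel {a b : ℕ} {u : Fin a → F} {v v' : Fin b → F}
    (hu : u ≠ 0) (h : vecMulVec u v = vecMulVec u v') : v = v' := by
  obtain ⟨i, hi⟩ := exists_ne_zero_coord hu
  ext j
  have := congrFun (congrFun h i) j
  rw [vecMulVec_apply, vecMulVec_apply] at this
  exact mul_left_cancel₀ hi this

lemma vecMulVec_right_cancel {a b : ℕ} {u u' : Fin a → F} {v : Fin b → F}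
    (hv : v ≠ 0) (h : vecMulVec u v = vecMulVec u' v) : u = u' := by
  have := congrArg Matrix.transpose h
  rw [vecMulVec_transpose, vecMulVec_transpose] at this
  exact vecMulVec_left_cancel hv this

/-- two representations of a nonzero rank-one matrix have proportional columns -/
lemma dep_left_of_vecMulVec_eq {a b : ℕ} {x x' : Fin a → F} {y y' : Fin b → F}
    (h : vecMulVec x y = vecMulVec x' y') (hne : vecMulVec x y ≠ 0) :
    ∃ c : F, c ≠ 0 ∧ x' = c • x := by
  have hx : x ≠ 0 := fun h0 => hne (vecMulVec_eq_zero_iff.mpr (Or.inl h0))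
  have hy : y ≠ 0 := fun h0 => hne (vecMulVec_eq_zero_iff.mpr (Or.inr h0))
  have hx' : x' ≠ 0 := by
    intro h0
    rw [h0] at h
    exact hne (h.trans (vecMulVec_eq_zero_iff.mpr (Or.inl rfl)))
  have hy' : y' ≠ 0 := by
    intro h0
    rw [h0] at h
    exact hne (h.trans (vecMulVec_eq_zero_iff.mpr (Or.inr rfl)))
  obtain ⟨j, hj⟩ := exists_ne_zero_coord hy
  have hyj' : y' j ≠ 0 := by
    intro h0
    apply hx
    ext i
    have := congrFun (congrFun h i) j
    rw [vecMulVec_apply, vecMulVec_apply, h0, mul_zero] at this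
    simpa [hj] using this
  refine ⟨y j / y' j, div_ne_zero hj hyj', ?_⟩
  ext i
  have := congrFun (congrFun h i) j
  rw [vecMulVec_apply, vecMulVec_apply] at this
  simp only [Pi.smul_apply, smul_eq_mul]
  field_simp
  linear_combination this.symm

lemma dep_right_of_vecMulVec_eq {a b : ℕ} {x x' : Fin a → F} {y y' : Fin b → F}
    (h : vecMulVec x y = vecMulVec x' y') (hne : vecMulVec x y ≠ 0) :
    ∃ c : F, c ≠ 0 ∧ y' = c • y := by
  have h' := congrArg Matrix.transpose h
  rw [vecMulVec_transpose, vecMulVec_transpose] at h'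
  refine dep_left_of_vecMulVec_eq h' ?_
  intro h0
  apply hne
  have := congrArg Matrix.transpose h0
  rwa [vecMulVec_transpose, Matrix.transpose_zero] at this

/-- the key rank-2 lemma: a sum of two genuinely independent rank-one matrices
is not of rank ≤ 1. -/
lemma sum_ne_vecMulVec {a b : ℕ} {u1 u2 : Fin a → F} {v1 v2 : Fin b → F}
    (hu : ¬ Dep u1 u2) (hv : ¬ Dep v1 v2) (x : Fin a → F) (y : Fin b → F) :
    vecMulVec u1 v1 + vecMulVec u2 v2 ≠ vecMulVec x y := by
  intro h
  -- find a 2x2 nonzero minor of the pair (v1, v2)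
  obtain ⟨j1, j2, hd⟩ : ∃ j1 j2, v1 j1 * v2 j2 - v1 j2 * v2 j1 ≠ 0 := by
    by_contra hc
    push_neg at hc
    obtain ⟨j0, hj0⟩ := exists_ne_zero_coord (not_dep.left_ne hv)
    apply hv
    refine ⟨v2 j0 / v1 j0, Or.inl ?_⟩
    ext j
    have := hc j0 j
    simp only [Pi.smul_apply, smul_eq_mul]
    field_simp
    linear_combination this
  -- entries
  have hent : ∀ i j, u1 i * v1 j + u2 i * v2 j = x i * y j := by
    intro i j
    have := congrFun (congrFun h i) j
    simpa [vecMulVec_apply] using this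
  set d := v1 j1 * v2 j2 - v1 j2 * v2 j1 with hdd
  -- u1 = s • x  and u2 = t • x
  have hu1 : u1 = ((v2 j2 * y j1 - v2 j1 * y j2)/d) • x := by
    ext i
    have h1 := hent i j1
    have h2 := hent i j2
    simp only [Pi.smul_apply, smul_eq_mul]
    field_simp
    linear_combination v2 j2 * h1 - v2 j1 * h2
  have hu2 : u2 = ((v1 j1 * y j2 - v1 j2 * y j1)/d) • x := by
    ext i
    have h1 := hent i j1
    have h2 := hent i j2
    simp only [Pi.smul_apply, smul_eq_mul]
    field_simp
    linear_combination v1 j1 * h2 - v1 j2 * h1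
  set s := (v2 j2 * y j1 - v2 j1 * y j2)/d
  set t := (v1 j1 * y j2 - v1 j2 * y j1)/d
  have hs : s ≠ 0 := by
    intro h0
    rw [h0, zero_smul] at hu1
    exact not_dep.left_ne hu hu1
  apply hu
  refine ⟨t / s, Or.inl ?_⟩
  rw [hu1, hu2, smul_smul, div_mul_cancel₀ _ hs]


section P3
variable {F : Type*} [Field F] {a b c d : ℕ}

/-- axioms satisfied by `(u, v) ↦ f (vecMulVec u v)` for a rank-preserving
bijective linear `f`. -/
structure Good (g : (Fin a → F) → (Fin b → F) → Matrix (Fin c) (Fin d) F) : Prop where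
  addu : ∀ u u' v, g (u + u') v = g u v + g u' v
  smulu : ∀ (t : F) u v, g (t • u) v = t • g u v
  addv : ∀ u v v', g u (v + v') = g u v + g u v'
  smulv : ∀ (t : F) u v, g u (t • v) = t • g u v
  r1 : ∀ u v, ∃ x y, g u v = vecMulVec x y
  ker : ∀ u v, g u v = 0 → u = 0 ∨ v = 0
  r1rev : ∀ u1 v1 u2 v2 x y, g u1 v1 + g u2 v2 = vecMulVec x y →
      ∃ x' y', vecMulVec u1 v1 + vecMulVec u2 v2 = vecMulVec x' y'

variable {g : (Fin a → F) → (Fin b → F) → Matrix (Fin c) (Fin d) F}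

lemma Good.zerou (hg : Good g) (v : Fin b → F) : g 0 v = 0 := by
  have := hg.smulu 0 0 v
  simpa using this

lemma Good.zerov (hg : Good g) (u : Fin a → F) : g u 0 = 0 := by
  have := hg.smulv 0 u 0
  simpa using this

lemma Good.nonzero (hg : Good g) {u v} (hu : u ≠ 0) (hv : v ≠ 0) : g u v ≠ 0 := by
  intro h
  rcases hg.ker u v h with h | h
  exacts [hu h, hv h]

lemma Good.subv (hg : Good g) (u : Fin a → F) (v v' : Fin b → F) :
    g u (v - v') = g u v - g u v' := by
  have h := hg.addv u (v - v') v'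
  rw [sub_add_cancel] at h
  rw [h]; abel

lemma Good.subu (hg : Good g) (u u' : Fin a → F) (v : Fin b → F) :
    g (u - u') v = g u v - g u' v := by
  have h := hg.addu (u - u') u' v
  rw [sub_add_cancel] at h
  rw [h]; abel

/-- cancel in the second variable -/
lemma Good.cancelv (hg : Good g) {u v v'} {t : F} (hu : u ≠ 0)
    (h : g u v = t • g u v') : v = t • v' := by
  have h2 : g u (v - t • v') = 0 := by
    rw [hg.subv, hg.smulv, h, sub_self]
  rcases hg.ker _ _ h2 with h3 | h3
  · exact absurd h3 hu
  · rw [sub_eq_zero] at h3; exact h3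

lemma Good.cancelu (hg : Good g) {u u' v} {t : F} (hv : v ≠ 0)
    (h : g u v = t • g u' v) : u = t • u' := by
  have h2 : g (u - t • u') v = 0 := by
    rw [hg.subu, hg.smulu, h, sub_self]
  rcases hg.ker _ _ h2 with h3 | h3
  · rw [sub_eq_zero] at h3; exact h3
  · exact absurd h3 hv

lemma Good.transpose (hg : Good g) : Good (fun u v => (g u v)ᵀ) := by
  constructor
  · intro u u' v; simp [hg.addu]
  · intro t u v; simp [hg.smulu]
  · intro u v v'; simp [hg.addv]
  · intro t u v; simp [hg.smulv]
  · intro u v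
    obtain ⟨x, y, h⟩ := hg.r1 u v
    exact ⟨y, x, by rw [h, vecMulVec_transpose]⟩
  · intro u v h
    apply hg.ker u v
    simpa using congrArg Matrix.transpose h
  · intro u1 v1 u2 v2 x y h
    have h2 : g u1 v1 + g u2 v2 = vecMulVec y x := by
      have := congrArg Matrix.transpose h
      simpa [vecMulVec_transpose] using this
    obtain ⟨x', y', h3⟩ := hg.r1rev u1 v1 u2 v2 y x h2
    exact ⟨x', y', h3⟩

lemma Good.swap (hg : Good g) : Good (fun v u => g u v) := by
  constructor
  · intro u u' v; exact hg.addv v u u'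
  · intro t u v; exact hg.smulv t v u
  · intro u v v'; exact hg.addu v v' u
  · intro t u v; exact hg.smulu t v u
  · intro u v; exact hg.r1 v u
  · intro u v h; exact (hg.ker v u h).symm
  · intro u1 v1 u2 v2 x y h
    obtain ⟨x', y', h3⟩ := hg.r1rev v1 u1 v2 u2 x y h
    refine ⟨y', x', ?_⟩
    have := congrArg Matrix.transpose h3
    simpa [vecMulVec_transpose] using this

/-- all values `g u v`, `v` varying, have column direction `x` -/
def Col (g : (Fin a → F) → (Fin b → F) → Matrix (Fin c) (Fin d) F) (u : Fin a → F) : Prop :=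
  ∃ x, x ≠ 0 ∧ ∀ v, ∃ y, g u v = vecMulVec x y

/-- all values `g u v`, `v` varying, have row direction `y` -/
def Row (g : (Fin a → F) → (Fin b → F) → Matrix (Fin c) (Fin d) F) (u : Fin a → F) : Prop :=
  ∃ y, y ≠ 0 ∧ ∀ v, ∃ x, g u v = vecMulVec x y

lemma row_iff_col_transpose {u : Fin a → F} :
    Row g u ↔ Col (fun u v => (g u v)ᵀ) u := by
  constructor
  · rintro ⟨y, hy, h⟩
    refine ⟨y, hy, fun v => ?_⟩
    obtain ⟨x, hx⟩ := h v
    exact ⟨x, by show (g u v)ᵀ = _; rw [hx, vecMulVec_transpose]⟩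
  · rintro ⟨y, hy, h⟩
    refine ⟨y, hy, fun v => ?_⟩
    obtain ⟨x, hx⟩ := h v
    refine ⟨x, ?_⟩
    have := congrArg Matrix.transpose hx
    simpa [vecMulVec_transpose] using this

lemma pairwise2 (hg : Good g) {u v v' xa ya xb yb} (hvv' : ¬ Dep v v')
    (ha : g u v = vecMulVec xa ya) (hb : g u v' = vecMulVec xb yb) :
    Dep xa xb ∨ Dep ya yb := by
  by_contra hc
  push_neg at hc
  obtain ⟨x, y, hxy⟩ := hg.r1 u (v + v')
  refine sum_ne_vecMulVec hc.1 hc.2 x y ?_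
  rw [← ha, ← hb, ← hg.addv]
  exact hxy

lemma pairwise_not_both (hg : Good g) {u v v' xa ya xb yb} (hu : u ≠ 0) (hvv' : ¬ Dep v v')
    (ha : g u v = vecMulVec xa ya) (hb : g u v' = vecMulVec xb yb) :
    ¬ (Dep xa xb ∧ Dep ya yb) := by
  rintro ⟨h1, h2⟩
  have hv : v ≠ 0 := not_dep.left_ne hvv'
  have hv' : v' ≠ 0 := not_dep.right_ne hvv'
  have hga : g u v ≠ 0 := hg.nonzero hu hv
  have hgb : g u v' ≠ 0 := hg.nonzero hu hv'
  have hxa : xa ≠ 0 := fun h0 => hga (ha.trans (vecMulVec_eq_zero_iff.mpr (Or.inl h0)))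
  have hya : ya ≠ 0 := fun h0 => hga (ha.trans (vecMulVec_eq_zero_iff.mpr (Or.inr h0)))
  obtain ⟨s, rfl⟩ := h1.resolve hxa
  obtain ⟨t, rfl⟩ := h2.resolve hya
  have : g u v' = (s * t) • g u v := by
    rw [ha, hb, vecMulVec_smul_left, vecMulVec_smul_right, smul_smul, mul_comm]
  have := hg.cancelv hu this
  exact hvv' ⟨s * t, Or.inl this⟩

lemma col_of_dep (hg : Good g) {u v1 v2 x1 y1 x2 y2} (hu : u ≠ 0) (hv : ¬ Dep v1 v2)
    (h1 : g u v1 = vecMulVec x1 y1) (h2 : g u v2 = vecMulVec x2 y2) (hx : Dep x1 x2) :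
    Col g u := by
  have hv1 : v1 ≠ 0 := not_dep.left_ne hv
  have hv2 : v2 ≠ 0 := not_dep.right_ne hv
  have hg1 : g u v1 ≠ 0 := hg.nonzero hu hv1
  have hg2 : g u v2 ≠ 0 := hg.nonzero hu hv2
  have hx1 : x1 ≠ 0 := fun h0 => hg1 (h1.trans (vecMulVec_eq_zero_iff.mpr (Or.inl h0)))
  have hy1 : y1 ≠ 0 := fun h0 => hg1 (h1.trans (vecMulVec_eq_zero_iff.mpr (Or.inr h0)))
  have hx2 : x2 ≠ 0 := fun h0 => hg2 (h2.trans (vecMulVec_eq_zero_iff.mpr (Or.inl h0)))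
  have hy2 : y2 ≠ 0 := fun h0 => hg2 (h2.trans (vecMulVec_eq_zero_iff.mpr (Or.inr h0)))
  refine ⟨x1, hx1, fun v => ?_⟩
  rcases eq_or_ne v 0 with rfl | hv0
  · exact ⟨0, by rw [hg.zerov]; ext i j; simp [vecMulVec_apply]⟩
  obtain ⟨xv, yv, hrep⟩ := hg.r1 u v
  have hgv : g u v ≠ 0 := hg.nonzero hu hv0
  -- it suffices to prove Dep x1 xv
  suffices hsuff : Dep x1 xv by
    obtain ⟨t, rfl⟩ := hsuff.resolve hx1
    exact ⟨t • yv, by rw [hrep, vecMulVec_smul_left, vecMulVec_smul_right]⟩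
  -- helper : if v is dependent on vi with column xi, transfer
  have key : ∀ (vi : Fin b → F) (xi : Fin c → F) (yi : Fin d → F), vi ≠ 0 →
      g u vi = vecMulVec xi yi → Dep vi v → Dep xi xv := by
    intro vi xi yi hvi hi hdi
    obtain ⟨t, rfl⟩ := hdi.resolve hvi
    have : g u (t • vi) = t • g u vi := hg.smulv t u vi
    rw [hrep, hi, ← vecMulVec_smul_right] at this
    obtain ⟨cc, hcc, h⟩ := dep_left_of_vecMulVec_eq this.symm (by
      rw [vecMulVec_smul_right, ← hi, ← hg.smulv]; exact hgv)
    exact ⟨cc, Or.inl h⟩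
  by_cases hd1 : Dep v1 v
  · exact key v1 x1 y1 hv1 h1 hd1
  rcases pairwise2 hg hd1 h1 hrep with hca | hra
  · exact hca
  by_cases hd2 : Dep v2 v
  · have := key v2 x2 y2 hv2 h2 hd2
    exact dep_trans hx2 (dep_symm hx) this
  rcases pairwise2 hg hd2 h2 hrep with hcb | hrb
  · exact dep_trans hx2 (dep_symm hx) hcb
  · exfalso
    have hyv : yv ≠ 0 := fun h0 => hgv (hrep.trans (vecMulVec_eq_zero_iff.mpr (Or.inr h0)))
    have : Dep y1 y2 := dep_trans hyv (dep_symm hra) (dep_symm hrb)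
    exact pairwise_not_both hg hu hv h1 h2 ⟨hx, this⟩

lemma dichotomy (hg : Good g) (hb : 2 ≤ b) {u : Fin a → F} (hu : u ≠ 0) :
    Col g u ∨ Row g u := by
  have h01 : (⟨0, by omega⟩ : Fin b) ≠ ⟨1, by omega⟩ := by simp [Fin.ext_iff]
  set v1 : Fin b → F := Pi.single ⟨0, by omega⟩ 1 with hv1def
  set v2 : Fin b → F := Pi.single ⟨1, by omega⟩ 1 with hv2def
  have hv : ¬ Dep v1 v2 := not_dep_single h01
  obtain ⟨x1, y1, h1⟩ := hg.r1 u v1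
  obtain ⟨x2, y2, h2⟩ := hg.r1 u v2
  rcases pairwise2 hg hv h1 h2 with hx | hy
  · exact Or.inl (col_of_dep hg hu hv h1 h2 hx)
  · right
    rw [row_iff_col_transpose]
    have hgT := hg.transpose
    refine col_of_dep (x1 := y1) (y1 := x1) (x2 := y2) (y2 := x2) hgT hu hv ?_ ?_ hy
    · show (g u v1)ᵀ = vecMulVec y1 x1
      rw [h1, vecMulVec_transpose]
    · show (g u v2)ᵀ = vecMulVec y2 x2
      rw [h2, vecMulVec_transpose]

end P3

section P4
variable {F : Type*} [Field F] {a b c d : ℕ}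
variable {g : (Fin a → F) → (Fin b → F) → Matrix (Fin c) (Fin d) F}

/-- a fixed `u ≠ 0` cannot send two independent vectors into a single line
of matrices. -/
lemma no_two_indep_in_pencil (hg : Good g) {u} (hu : u ≠ 0) {v v'} (hvv' : ¬ Dep v v')
    (P : Matrix (Fin c) (Fin d) F) (h1 : ∃ t : F, g u v = t • P)
    (h2 : ∃ t : F, g u v' = t • P) : False := by
  obtain ⟨t, ht⟩ := h1
  obtain ⟨t', ht'⟩ := h2
  have h0 : g u (t' • v - t • v') = 0 := by
    rw [hg.subv, hg.smulv, hg.smulv, ht, ht', smul_smul, smul_smul, mul_comm, sub_self]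
  rcases hg.ker _ _ h0 with h3 | h3
  · exact hu h3
  · rw [sub_eq_zero] at h3
    have h4 : t' • v + (-t) • v' = 0 := by rw [neg_smul, h3]; abel
    obtain ⟨he1, he2⟩ := not_dep_coeffs hvv' h4
    rw [he1, zero_smul] at ht'
    rcases hg.ker _ _ ht' with h5 | h5
    · exact hu h5
    · exact not_dep.right_ne hvv' h5

lemma cross (hg : Good g) (hb : 2 ≤ b) {u1 u2} (h12 : ¬ Dep u1 u2)
    (hc1 : Col g u1) (hr2 : Row g u2) : False := by
  obtain ⟨x1, hx1, hcol⟩ := hc1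
  obtain ⟨y2, hy2, hrow⟩ := hr2
  have hu1 : u1 ≠ 0 := not_dep.left_ne h12
  have hu2 : u2 ≠ 0 := not_dep.right_ne h12
  set P := vecMulVec x1 y2 with hP
  set bad1 : (Fin b → F) → Prop := fun v => ∃ t : F, g u1 v = t • P with hbad1
  set bad2 : (Fin b → F) → Prop := fun v => ∃ t : F, g u2 v = t • P with hbad2
  -- three pairwise independent candidates
  have h01 : (⟨0, by omega⟩ : Fin b) ≠ ⟨1, by omega⟩ := by simp [Fin.ext_iff]
  set w1 : Fin b → F := Pi.single ⟨0, by omega⟩ 1 with hw1def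
  set w2 : Fin b → F := Pi.single ⟨1, by omega⟩ 1 with hw2def
  have h12' : ¬ Dep w1 w2 := not_dep_single h01
  have h13 : ¬ Dep w1 (w1 + w2) := not_dep_add_right h12'
  have h23 : ¬ Dep w2 (w1 + w2) := not_dep_add_left h12'
  -- find w avoiding both bad sets
  have hmain : ∀ w, ¬ Dep w1 w ∨ ¬ Dep w2 w → True := fun _ _ => trivial
  obtain ⟨w, hnb1, hnb2⟩ : ∃ w, ¬ bad1 w ∧ ¬ bad2 w := by
    by_cases hb11 : bad1 w1
    · have hnb12 : ¬ bad1 w2 := fun h => no_two_indep_in_pencil hg hu1 h12' P hb11 h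
      have hnb13 : ¬ bad1 (w1 + w2) := fun h => no_two_indep_in_pencil hg hu1 h13 P hb11 h
      by_cases hb22 : bad2 w2
      · exact ⟨w1 + w2, hnb13, fun h => no_two_indep_in_pencil hg hu2 h23 P hb22 h⟩
      · exact ⟨w2, hnb12, hb22⟩
    · by_cases hb21 : bad2 w1
      · have hnb22 : ¬ bad2 w2 := fun h => no_two_indep_in_pencil hg hu2 h12' P hb21 h
        have hnb23 : ¬ bad2 (w1 + w2) := fun h => no_two_indep_in_pencil hg hu2 h13 P hb21 h
        by_cases hb12 : bad1 w2
        · exact ⟨w1 + w2, fun h => no_two_indep_in_pencil hg hu1 h23 P hb12 h, hnb23⟩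
        · exact ⟨w2, hb12, hnb22⟩
      · exact ⟨w1, hb11, hb21⟩
  have hw0 : w ≠ 0 := by
    rintro rfl
    exact hnb1 ⟨0, by rw [hg.zerov, zero_smul]⟩
  obtain ⟨yw, hyw⟩ := hcol w
  obtain ⟨xw, hxw⟩ := hrow w
  have hne1 : g u1 w ≠ 0 := hg.nonzero hu1 hw0
  have hne2 : g u2 w ≠ 0 := hg.nonzero hu2 hw0
  have hnd_y : ¬ Dep yw y2 := by
    intro hdep
    obtain ⟨t, ht⟩ := (dep_symm hdep).resolve hy2
    exact hnb1 ⟨t, by rw [hyw, ht, vecMulVec_smul_right]⟩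
  have hnd_x : ¬ Dep x1 xw := by
    intro hdep
    obtain ⟨t, ht⟩ := hdep.resolve hx1
    exact hnb2 ⟨t, by rw [hxw, ht, vecMulVec_smul_left]⟩
  obtain ⟨x, y, hxy⟩ := hg.r1 (u1 + u2) w
  refine sum_ne_vecMulVec hnd_x hnd_y x y ?_
  rw [← hyw, ← hxw, ← hg.addu]
  exact hxy

lemma not_col_and_row (hg : Good g) (hb : 2 ≤ b) {u} (hu : u ≠ 0)
    (hc : Col g u) (hr : Row g u) : False := by
  obtain ⟨x0, hx0, hcol⟩ := hc
  obtain ⟨y0, hy0, hrow⟩ := hr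
  have h01 : (⟨0, by omega⟩ : Fin b) ≠ ⟨1, by omega⟩ := by simp [Fin.ext_iff]
  set v1 : Fin b → F := Pi.single ⟨0, by omega⟩ 1 with hv1def
  set v2 : Fin b → F := Pi.single ⟨1, by omega⟩ 1 with hv2def
  have hv : ¬ Dep v1 v2 := not_dep_single h01
  have key : ∀ v, v ≠ 0 → ∃ t : F, g u v = t • vecMulVec x0 y0 := by
    intro v hv0
    obtain ⟨yv, hyv⟩ := hcol v
    obtain ⟨xv, hxv⟩ := hrow v
    have hne : g u v ≠ 0 := hg.nonzero hu hv0
    obtain ⟨t, ht0, ht⟩ := dep_right_of_vecMulVec_eq (hyv.symm.trans hxv) (hyv ▸ hne)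
    -- ht : y0 = t • yv
    refine ⟨t⁻¹, ?_⟩
    rw [hyv, ← vecMulVec_smul_right, ht, smul_smul, inv_mul_cancel₀ ht0, one_smul]
  exact no_two_indep_in_pencil hg hu hv (vecMulVec x0 y0)
    (key v1 (not_dep.left_ne hv)) (key v2 (not_dep.right_ne hv))

lemma single_ne_zero' {n : ℕ} (i : Fin n) : (Pi.single i 1 : Fin n → F) ≠ 0 := by
  intro h
  have := congrFun h i
  simp at this

lemma col_smul (hg : Good g) {u : Fin a → F} {t : F} (ht : t ≠ 0) (h : Col g u) :
    Col g (t • u) := by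
  obtain ⟨x0, hx0, hcol⟩ := h
  refine ⟨x0, hx0, fun v => ?_⟩
  obtain ⟨y, hy⟩ := hcol v
  exact ⟨t • y, by rw [hg.smulu, hy, vecMulVec_smul_right]⟩

lemma row_smul (hg : Good g) {u : Fin a → F} {t : F} (ht : t ≠ 0) (h : Row g u) :
    Row g (t • u) := by
  obtain ⟨y0, hy0, hrow⟩ := h
  refine ⟨y0, hy0, fun v => ?_⟩
  obtain ⟨x, hx⟩ := hrow v
  exact ⟨t • x, by rw [hg.smulu, hx, vecMulVec_smul_left]⟩

lemma classify (hg : Good g) (ha : 2 ≤ a) (hb : 2 ≤ b) :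
    (∀ u, u ≠ 0 → Col g u) ∨ (∀ u, u ≠ 0 → Row g u) := by
  set u0 : Fin a → F := Pi.single ⟨0, by omega⟩ 1 with hu0def
  have hu0 : u0 ≠ 0 := single_ne_zero' _
  rcases dichotomy hg hb hu0 with hC | hR
  · left
    intro u hu
    by_cases hd : Dep u0 u
    · obtain ⟨t, rfl⟩ := hd.resolve hu0
      have ht : t ≠ 0 := fun h0 => hu (by rw [h0, zero_smul])
      exact col_smul hg ht hC
    · rcases dichotomy hg hb hu with h | h
      · exact h
      · exact absurd (cross hg hb hd hC h) (by simp)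
  · right
    intro u hu
    by_cases hd : Dep u0 u
    · obtain ⟨t, rfl⟩ := hd.resolve hu0
      have ht : t ≠ 0 := fun h0 => hu (by rw [h0, zero_smul])
      exact row_smul hg ht hR
    · rcases dichotomy hg hb hu with h | h
      · exact absurd (cross hg hb (fun hdd => hd (dep_symm hdd)) h hR) (by simp)
      · exact h

end P4

section P5
variable {F : Type*} [Field F] {a b c d : ℕ}
variable {g : (Fin a → F) → (Fin b → F) → Matrix (Fin c) (Fin d) F}

/-- extract the (canonical) row function of a fixed-column point -/
lemma extract (hg : Good g) {u : Fin a → F} {x : Fin c → F} (hu : u ≠ 0) (hx : x ≠ 0)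
    (h : ∀ v, ∃ y, g u v = vecMulVec x y) :
    ∃ N : (Fin b → F) → (Fin d → F),
      (∀ v v', N (v + v') = N v + N v') ∧ (∀ (t : F) v, N (t • v) = t • N v) ∧
      (∀ v, N v = 0 → v = 0) ∧ (∀ v, g u v = vecMulVec x (N v)) := by
  obtain ⟨i0, hi0⟩ := exists_ne_zero_coord hx
  set N : (Fin b → F) → (Fin d → F) := fun v j => g u v i0 j / x i0 with hN
  have hrep : ∀ v, g u v = vecMulVec x (N v) := by
    intro v
    obtain ⟨y, hy⟩ := h v
    have : N v = y := by
      ext j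
      rw [hN]
      simp only [hy, vecMulVec_apply]
      field_simp
    rw [this, hy]
  refine ⟨N, ?_, ?_, ?_, hrep⟩
  · intro v v'
    ext j
    simp only [hN, hg.addv, Matrix.add_apply, Pi.add_apply]
    ring
  · intro t v
    ext j
    simp only [hN, hg.smulv, Matrix.smul_apply, Pi.smul_apply, smul_eq_mul]
    ring
  · intro v h0
    have : g u v = 0 := by rw [hrep v, h0]; exact vecMulVec_eq_zero_iff.mpr (Or.inr rfl)
    rcases hg.ker _ _ this with h1 | h1
    · exact absurd h1 hu
    · exact h1

/-- the rigidity lemma: if `Q v` is everywhere a nonzero multiple of `P v` and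
they agree at one nonzero point, they agree everywhere. -/
lemma scaling_rigidity {bb dd : ℕ} (hb : 2 ≤ bb) (P Q : (Fin bb → F) → (Fin dd → F))
    (hPadd : ∀ v v', P (v + v') = P v + P v')
    (hPsmul : ∀ (t : F) v, P (t • v) = t • P v)
    (hPker : ∀ v, P v = 0 → v = 0)
    (hQadd : ∀ v v', Q (v + v') = Q v + Q v')
    (hdep : ∀ v, v ≠ 0 → ∃ t : F, t ≠ 0 ∧ Q v = t • P v)
    {v0 : Fin bb → F} (hv0 : v0 ≠ 0) (hbase : Q v0 = P v0) : ∀ v, Q v = P v := by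
  have hP0 : P 0 = 0 := by
    have := hPadd 0 0
    simp only [add_zero] at this
    exact left_eq_add.mp this
  have hQ0 : Q 0 = 0 := by
    have := hQadd 0 0
    simp only [add_zero] at this
    exact left_eq_add.mp this
  have hPne : ∀ v, v ≠ 0 → P v ≠ 0 := fun v hv h0 => hv (hPker v h0)
  have hPneg : ∀ v, P (-v) = - P v := by
    intro v
    have := hPadd v (-v)
    simp only [add_neg_cancel, hP0] at this
    exact eq_neg_of_add_eq_zero_right this.symm
  -- step 1 : the independent case
  have step1 : ∀ w z, z ≠ 0 → w ≠ 0 → Q w = P w → ¬ Dep (P z) (P w) → Q z = P z := by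
    intro w z hz hw hQw hnd
    obtain ⟨t, ht0, ht⟩ := hdep z hz
    have hzw : z + w ≠ 0 := by
      intro h0
      have hzz : z = -w := eq_neg_of_add_eq_zero_left h0
      apply hnd
      rw [hzz, hPneg]
      exact ⟨-1, Or.inl (by rw [neg_smul, one_smul, neg_neg])⟩
    obtain ⟨t', ht0', ht'⟩ := hdep (z + w) hzw
    have h1 := hQadd z w
    rw [ht', ht, hQw, hPadd, smul_add] at h1
    have heq : (t - t') • P z + (1 - t') • P w = 0 := by
      linear_combination (norm := module) h1.symm
    obtain ⟨he1, he2⟩ := not_dep_coeffs hnd heq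
    have ht'1 : t' = 1 := by linear_combination -he2
    have htt : t = 1 := by linear_combination he1 + ht'1
    rw [ht, htt, one_smul]
  intro v
  rcases eq_or_ne v 0 with rfl | hv
  · rw [hQ0, hP0]
  by_cases hnd : ¬ Dep (P v) (P v0)
  · exact step1 v0 v hv hv0 hbase hnd
  push_neg at hnd
  -- dependent case
  have hPv : P v ≠ 0 := hPne v hv
  have hPv0 : P v0 ≠ 0 := hPne v0 hv0
  obtain ⟨dd0, hdd⟩ := (dep_symm hnd).resolve hPv0
  have hdd0 : dd0 ≠ 0 := by
    intro h0
    rw [h0, zero_smul] at hdd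
    exact hPv hdd
  obtain ⟨w0, hw0nd⟩ := exists_not_dep hb hv0
  have hw0 : w0 ≠ 0 := not_dep.right_ne hw0nd
  have hndP : ¬ Dep (P v0) (P w0) := by
    intro hd
    obtain ⟨s, hs⟩ := hd.resolve hPv0
    have h2 : P (w0 - s • v0) = 0 := by
      have h3 := hPadd (w0 - s • v0) (s • v0)
      rw [sub_add_cancel] at h3
      have h4 : P (w0 - s • v0) = P w0 - P (s • v0) := eq_sub_of_add_eq h3.symm
      rw [h4, hPsmul, hs, sub_self]
    have h5 := hPker _ h2
    rw [sub_eq_zero] at h5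
    exact hw0nd ⟨s, Or.inl h5⟩
  have hQw0 : Q w0 = P w0 := step1 v0 w0 hw0 hv0 hbase (fun hd => hndP (dep_symm hd))
  -- now redo the step1 computation with base w0
  obtain ⟨t, ht0, ht⟩ := hdep v hv
  have hvw : v + w0 ≠ 0 := by
    intro h0
    have hveq : v = -w0 := eq_neg_of_add_eq_zero_left h0
    apply hndP
    refine ⟨-dd0, Or.inl ?_⟩
    rw [neg_smul]
    calc P w0 = P (-v) := by rw [hveq, neg_neg]
    _ = - P v := hPneg v
    _ = -(dd0 • P v0) := by rw [hdd]
  obtain ⟨t', ht0', ht'⟩ := hdep (v + w0) hvw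
  have h1 := hQadd v w0
  rw [ht', ht, hQw0, hPadd, smul_add, hdd] at h1
  have heq : (t * dd0 - t' * dd0) • P v0 + (1 - t') • P w0 = 0 := by
    linear_combination (norm := module) h1.symm
  obtain ⟨he1, he2⟩ := not_dep_coeffs hndP heq
  have ht'1 : t' = 1 := by linear_combination -he2
  have htt : t = 1 := by
    have h3 : t * dd0 = 1 * dd0 := by linear_combination he1 + dd0 * ht'1
    exact mul_right_cancel₀ hdd0 h3
  rw [ht, htt, one_smul]

end P5

section P6
variable {F : Type*} [Field F] {a b c d : ℕ}
variable {g : (Fin a → F) → (Fin b → F) → Matrix (Fin c) (Fin d) F}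

lemma main_col (hg : Good g) (ha : 2 ≤ a) (hb : 2 ≤ b)
    (hcol : ∀ u, u ≠ 0 → Col g u) :
    ∃ (L : (Fin a → F) → (Fin c → F)) (N : (Fin b → F) → (Fin d → F)),
      (∀ u u', L (u + u') = L u + L u') ∧ (∀ (t : F) u, L (t • u) = t • L u) ∧
      (∀ u, L u = 0 → u = 0) ∧
      (∀ v v', N (v + v') = N v + N v') ∧ (∀ (t : F) v, N (t • v) = t • N v) ∧
      (∀ v, N v = 0 → v = 0) ∧
      ∀ u v, g u v = vecMulVec (L u) (N v) := by
  choose x hx hcolx using hcol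
  -- independent u's have independent columns
  have hXdep : ∀ u1 u2 (h1 : u1 ≠ 0) (h2 : u2 ≠ 0), ¬ Dep u1 u2 →
      ¬ Dep (x u1 h1) (x u2 h2) := by
    intro u1 u2 h1 h2 hnd hdep
    obtain ⟨t, ht⟩ := hdep.resolve (hx u1 h1)
    have h01 : (⟨0, by omega⟩ : Fin b) ≠ ⟨1, by omega⟩ := by simp [Fin.ext_iff]
    set v1 : Fin b → F := Pi.single ⟨0, by omega⟩ 1
    set v2 : Fin b → F := Pi.single ⟨1, by omega⟩ 1
    have hv12 : ¬ Dep v1 v2 := not_dep_single h01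
    obtain ⟨y1, hy1⟩ := hcolx u1 h1 v1
    obtain ⟨y2, hy2⟩ := hcolx u2 h2 v2
    have hsum : g u1 v1 + g u2 v2 = vecMulVec (x u1 h1) (y1 + t • y2) := by
      rw [hy1, hy2, ht, vecMulVec_smul_left, ← vecMulVec_smul_right, ← vecMulVec_add_right]
    obtain ⟨x', y', h'⟩ := hg.r1rev u1 v1 u2 v2 _ _ hsum
    exact sum_ne_vecMulVec hnd hv12 x' y' h'
  -- every v ≠ 0 has a fixed row direction
  have hrowv : ∀ v, v ≠ 0 → ∃ q, q ≠ 0 ∧ ∀ u, ∃ xx, g u v = vecMulVec xx q := by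
    intro v hv
    rcases dichotomy hg.swap ha hv with hC | hR
    · exfalso
      obtain ⟨p, hp, hcp⟩ := hC
      have h01 : (⟨0, by omega⟩ : Fin a) ≠ ⟨1, by omega⟩ := by simp [Fin.ext_iff]
      set u1 : Fin a → F := Pi.single ⟨0, by omega⟩ 1
      set u2 : Fin a → F := Pi.single ⟨1, by omega⟩ 1
      have hu12 : ¬ Dep u1 u2 := not_dep_single h01
      have hu1 : u1 ≠ 0 := single_ne_zero' _
      have hu2 : u2 ≠ 0 := single_ne_zero' _
      obtain ⟨ya, hya⟩ := hcp u1
      obtain ⟨yb, hyb⟩ := hcp u2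
      obtain ⟨y1, hy1⟩ := hcolx u1 hu1 v
      obtain ⟨y2, hy2⟩ := hcolx u2 hu2 v
      have hne1 : g u1 v ≠ 0 := hg.nonzero hu1 hv
      have hne2 : g u2 v ≠ 0 := hg.nonzero hu2 hv
      obtain ⟨c1, hc1, hC1⟩ := dep_left_of_vecMulVec_eq (hya.symm.trans hy1)
        (by rw [← hya]; exact hne1)
      obtain ⟨c2, hc2, hC2⟩ := dep_left_of_vecMulVec_eq (hyb.symm.trans hy2)
        (by rw [← hyb]; exact hne2)
      apply hXdep u1 u2 hu1 hu2 hu12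
      exact dep_trans hp ⟨c1, Or.inl hC1⟩ ⟨c2, Or.inl hC2⟩
    · obtain ⟨q, hq, hrq⟩ := hR
      exact ⟨q, hq, hrq⟩
  -- base points
  set u0 : Fin a → F := Pi.single (⟨0, by omega⟩ : Fin a) 1 with hu0def
  have hu0 : u0 ≠ 0 := single_ne_zero' _
  set v0 : Fin b → F := Pi.single (⟨0, by omega⟩ : Fin b) 1 with hv0def
  have hv0 : v0 ≠ 0 := single_ne_zero' _
  obtain ⟨q0, hq0, hrow0⟩ := hrowv v0 hv0
  obtain ⟨j0, hj0⟩ := exists_ne_zero_coord hq0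
  -- the column map, defined canonically
  set L : (Fin a → F) → (Fin c → F) := fun u i => g u v0 i j0 / q0 j0 with hLdef
  have hLadd : ∀ u u', L (u + u') = L u + L u' := by
    intro u u'
    ext i
    simp only [hLdef, hg.addu, Matrix.add_apply, Pi.add_apply]
    ring
  have hLsmul : ∀ (t : F) u, L (t • u) = t • L u := by
    intro t u
    ext i
    simp only [hLdef, hg.smulu, Matrix.smul_apply, Pi.smul_apply, smul_eq_mul]
    ring
  have hLrep : ∀ u, g u v0 = vecMulVec (L u) q0 := by
    intro u
    obtain ⟨xx, hxx⟩ := hrow0 u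
    have hLx : L u = xx := by
      ext i
      simp only [hLdef, hxx, vecMulVec_apply]
      field_simp
    rw [hLx, hxx]
  have hLker : ∀ u, L u = 0 → u = 0 := by
    intro u h0
    have hz : g u v0 = 0 := by
      rw [hLrep u, h0]
      exact vecMulVec_eq_zero_iff.mpr (Or.inl rfl)
    rcases hg.ker _ _ hz with h | h
    · exact h
    · exact absurd h hv0
  have hLne : ∀ u, u ≠ 0 → L u ≠ 0 := fun u hu h0 => hu (hLker u h0)
  -- for each nonzero u, the column of g u · can be taken to be L u
  have hLcol : ∀ u (hu : u ≠ 0), ∀ v, ∃ y, g u v = vecMulVec (L u) y := by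
    intro u hu v
    obtain ⟨y0u, hy0u⟩ := hcolx u hu v0
    have hne : g u v0 ≠ 0 := hg.nonzero hu hv0
    obtain ⟨s, hs0, hs⟩ := dep_left_of_vecMulVec_eq ((hLrep u).symm.trans hy0u)
      (by rw [← hLrep u]; exact hne)
    obtain ⟨y, hy⟩ := hcolx u hu v
    exact ⟨s • y, by rw [hy, hs, vecMulVec_smul_left, vecMulVec_smul_right]⟩
  have hext : ∀ u (hu : u ≠ 0), ∃ N : (Fin b → F) → (Fin d → F),
      (∀ v v', N (v + v') = N v + N v') ∧ (∀ (t : F) v, N (t • v) = t • N v) ∧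
      (∀ v, N v = 0 → v = 0) ∧ (∀ v, g u v = vecMulVec (L u) (N v)) :=
    fun u hu => extract hg hu (hLne u hu) (hLcol u hu)
  choose NN hNadd hNsmul hNker hNrep using hext
  have hNv0 : ∀ u (hu : u ≠ 0), NN u hu v0 = q0 := by
    intro u hu
    have h1 : vecMulVec (L u) (NN u hu v0) = vecMulVec (L u) q0 := by
      rw [← hNrep u hu v0, hLrep]
    exact vecMulVec_left_cancel (hLne u hu) h1
  set P := NN u0 hu0 with hPdef
  have hall : ∀ u (hu : u ≠ 0) (v : Fin b → F), NN u hu v = P v := by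
    intro u hu
    refine scaling_rigidity hb P (NN u hu) (hNadd u0 hu0) (hNsmul u0 hu0) (hNker u0 hu0)
      (hNadd u hu) ?_ hv0 (by rw [hNv0 u hu, hPdef, hNv0 u0 hu0])
    intro v hv
    obtain ⟨qv, hqv, hrv⟩ := hrowv v hv
    obtain ⟨x1, hx1⟩ := hrv u
    obtain ⟨x2, hx2⟩ := hrv u0
    have hne1 : g u v ≠ 0 := hg.nonzero hu hv
    have hne2 : g u0 v ≠ 0 := hg.nonzero hu0 hv
    obtain ⟨c1, hc10, hc1⟩ := dep_right_of_vecMulVec_eq (hx1.symm.trans (hNrep u hu v))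
      (by rw [← hx1]; exact hne1)
    obtain ⟨c2, hc20, hc2⟩ := dep_right_of_vecMulVec_eq (hx2.symm.trans (hNrep u0 hu0 v))
      (by rw [← hx2]; exact hne2)
    refine ⟨c1 / c2, div_ne_zero hc10 hc20, ?_⟩
    rw [hc1, hPdef, hc2, smul_smul]
    congr 1
    field_simp
  refine ⟨L, P, hLadd, hLsmul, hLker, hNadd u0 hu0, hNsmul u0 hu0, hNker u0 hu0, ?_⟩
  intro u v
  rcases eq_or_ne u 0 with rfl | hu
  · rw [hg.zerou]
    have hL0 : L 0 = 0 := by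
      have := hLsmul 0 0
      simpa using this
    rw [hL0]
    exact (vecMulVec_eq_zero_iff.mpr (Or.inl rfl)).symm
  · rw [hNrep u hu v, hall u hu v]

end P6


section P7
variable {F : Type*} [Field F]


lemma mul_vecMulVec_mul {l m n p : ℕ} (A : Matrix (Fin l) (Fin n) F) (B : Matrix (Fin m) (Fin p) F)
    (u : Fin n → F) (v : Fin p → F) :
    A * vecMulVec u v * Bᵀ = vecMulVec (A *ᵥ u) (B *ᵥ v) := by
  ext i j
  simp only [Matrix.mul_apply, vecMulVec_apply, Matrix.mulVec, dotProduct,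
    Matrix.transpose_apply, Finset.sum_mul, Finset.mul_sum]
  apply Finset.sum_congr rfl
  intro k _
  apply Finset.sum_congr rfl
  intro k' _
  ring

lemma eq_sum {l m : ℕ} (A : Matrix (Fin l) (Fin m) F) :
    A = ∑ i, ∑ j, A i j • vecMulVec (Pi.single i (1:F)) (Pi.single j (1:F)) := by
  ext i' j'
  simp [Matrix.sum_apply, vecMulVec_apply, Pi.single_apply, Finset.sum_ite_eq, ite_and]

lemma to_gl {n : ℕ} (L : (Fin n → F) → (Fin n → F))
    (hadd : ∀ u u', L (u + u') = L u + L u') (hsmul : ∀ (t : F) u, L (t • u) = t • L u)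
    (hker : ∀ u, L u = 0 → u = 0) :
    ∃ M : GL (Fin n) F, ∀ u, (M : Matrix (Fin n) (Fin n) F) *ᵥ u = L u := by
  set Lmap : (Fin n → F) →ₗ[F] (Fin n → F) :=
    { toFun := L, map_add' := hadd, map_smul' := hsmul } with hLmap
  have hinj : Function.Injective Lmap := by
    intro u v huv
    have h2 : Lmap (u - v) = 0 := by rw [map_sub, huv, sub_self]
    have h := hker (u - v) h2
    rwa [sub_eq_zero] at h
  have hsurj : Function.Surjective Lmap := LinearMap.injective_iff_surjective.mp hinj
  set E := LinearEquiv.ofBijective Lmap ⟨hinj, hsurj⟩ with hE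
  have hcomp1 : Lmap.comp (E.symm : (Fin n → F) →ₗ[F] (Fin n → F)) = LinearMap.id := by
    apply LinearMap.ext
    intro v
    exact E.apply_symm_apply v
  have hcomp2 : ((E.symm : (Fin n → F) →ₗ[F] (Fin n → F)).comp Lmap) = LinearMap.id := by
    apply LinearMap.ext
    intro v
    exact E.symm_apply_apply v
  refine ⟨⟨LinearMap.toMatrix' Lmap, LinearMap.toMatrix' (E.symm : (Fin n → F) →ₗ[F] (Fin n → F)), ?_, ?_⟩, ?_⟩
  · rw [← LinearMap.toMatrix'_comp, hcomp1, LinearMap.toMatrix'_id]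
  · rw [← LinearMap.toMatrix'_comp, hcomp2, LinearMap.toMatrix'_id]
  · intro u
    show (LinearMap.toMatrix' Lmap) *ᵥ u = L u
    rw [← Matrix.toLin'_apply, Matrix.toLin'_toMatrix']
    rfl

/-- transpose of a GL element -/
def glT {n : ℕ} (M : GL (Fin n) F) : GL (Fin n) F :=
  ⟨M.val.transpose, M.inv.transpose, by rw [← Matrix.transpose_mul, M.inv_val, Matrix.transpose_one],
    by rw [← Matrix.transpose_mul, M.val_inv, Matrix.transpose_one]⟩

lemma finrank_le_of_inj {l m : ℕ} (L : (Fin l → F) → (Fin m → F))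
    (hadd : ∀ u u', L (u + u') = L u + L u') (hsmul : ∀ (t : F) u, L (t • u) = t • L u)
    (hker : ∀ u, L u = 0 → u = 0) : l ≤ m := by
  set Lmap : (Fin l → F) →ₗ[F] (Fin m → F) :=
    { toFun := L, map_add' := hadd, map_smul' := hsmul } with hLmap
  have hinj : Function.Injective Lmap := by
    intro u v huv
    have h2 : Lmap (u - v) = 0 := by rw [map_sub, huv, sub_self]
    have h := hker (u - v) h2
    rwa [sub_eq_zero] at h
  have := LinearMap.finrank_le_finrank_of_injective hinj
  simpa using this

lemma rank_le_one_iff_exists {l m : ℕ} (A : Matrix (Fin l) (Fin m) F) :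
    A.rank ≤ 1 ↔ ∃ u v, A = vecMulVec u v := by
  constructor
  · intro h
    rw [Matrix.rank] at h
    obtain ⟨x, hx⟩ := finrank_le_one_iff.mp h
    choose c hc using hx
    refine ⟨x, fun j => c ⟨A.mulVecLin (Pi.single j 1), LinearMap.mem_range_self _ _⟩, ?_⟩
    ext i j
    have h1 := hc ⟨A.mulVecLin (Pi.single j 1), LinearMap.mem_range_self _ _⟩
    have h2 := congrArg (fun (w : ↥(LinearMap.range A.mulVecLin)) => (w : Fin l → F) i) h1
    simp only [Submodule.coe_smul_of_tower] at h2
    have h3 : A.mulVecLin (Pi.single j 1) i = A i j := by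
      simp [Matrix.mulVecLin, Matrix.mulVec_single]
    rw [vecMulVec_apply, mul_comm]
    rw [← h3]
    exact h2.symm
  · rintro ⟨u, v, rfl⟩
    rw [vecMulVec_eq Unit]
    exact (rank_mul_le_left _ _).trans ((rank_le_card_width _).trans (by simp))

end P7

end RankPres

open RankPres in
/-- **Characterization of invertible linear rank-preserving maps on matrices.**
Every invertible `F`-linear rank-preserving map `f` on `F^{l×m}` is of the form
`A ↦ L * A * M`, or (only possible when `l = m`) of the form `A ↦ L * Aᵀ * M`,
for some invertible matrices `L ∈ GL_l(F)` and `M ∈ GL_m(F)`. -/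
theorem rank_preserving_linear_map_characterization
    {F : Type*} [Field F] [Fintype F] {l m : ℕ} (hl : 0 < l) (hm : 0 < m)
    (f : Matrix (Fin l) (Fin m) F ≃ₗ[F] Matrix (Fin l) (Fin m) F)
    (hf : ∀ A, (f A).rank = A.rank) :
    (∃ (L : GL (Fin l) F) (M : GL (Fin m) F),
        ∀ A, f A = (L : Matrix (Fin l) (Fin l) F) * A * (M : Matrix (Fin m) (Fin m) F)) ∨
    (∃ (h : l = m) (L : GL (Fin l) F) (M : GL (Fin m) F),
        ∀ A, f A = (L : Matrix (Fin l) (Fin l) F) *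
          (Matrix.submatrix Aᵀ (Fin.cast h) (Fin.cast h.symm)) * (M : Matrix (Fin m) (Fin m) F)) := by
  classical
  by_cases hl2 : 2 ≤ l
  · by_cases hm2 : 2 ≤ m
    · -- main case
      set g : (Fin l → F) → (Fin m → F) → Matrix (Fin l) (Fin m) F :=
        fun u v => f (Matrix.vecMulVec u v) with hgdef
      have hg : Good g := by
        constructor
        · intro u u' v
          simp only [hgdef]
          rw [vecMulVec_add_left, map_add]
        · intro t u v
          simp only [hgdef]
          rw [vecMulVec_smul_left, _root_.map_smul]
        · intro u v v'
          simp only [hgdef]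
          rw [vecMulVec_add_right, map_add]
        · intro t u v
          simp only [hgdef]
          rw [vecMulVec_smul_right, _root_.map_smul]
        · intro u v
          apply (rank_le_one_iff_exists _).mp
          rw [hf]
          exact (rank_le_one_iff_exists _).mpr ⟨u, v, rfl⟩
        · intro u v h
          have h2 : Matrix.vecMulVec u v = 0 := by
            apply f.injective
            rw [map_zero]
            exact h
          exact vecMulVec_eq_zero_iff.mp h2
        · intro u1 v1 u2 v2 x y h
          apply (rank_le_one_iff_exists _).mp
          rw [← hf]
          have h2 : f (Matrix.vecMulVec u1 v1 + Matrix.vecMulVec u2 v2) = Matrix.vecMulVec x y := by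
            rw [map_add]
            exact h
          rw [h2]
          exact (rank_le_one_iff_exists _).mpr ⟨x, y, rfl⟩
      rcases classify hg hl2 hm2 with hC | hR
      · -- standard form
        obtain ⟨L, N, hLa, hLs, hLk, hNa, hNs, hNk, hrep⟩ := main_col hg hl2 hm2 hC
        obtain ⟨ML, hML⟩ := to_gl L hLa hLs hLk
        obtain ⟨MN, hMN⟩ := to_gl N hNa hNs hNk
        left
        refine ⟨ML, glT MN, fun A => ?_⟩
        have key : ∀ u v, f (Matrix.vecMulVec u v) =
            (ML : Matrix (Fin l) (Fin l) F) * Matrix.vecMulVec u v *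
              ((MN : Matrix (Fin m) (Fin m) F))ᵀ := by
          intro u v
          rw [mul_vecMulVec_mul, hML, hMN]
          exact hrep u v
        have hA := eq_sum A
        have hglT : (glT MN : Matrix (Fin m) (Fin m) F) = ((MN : Matrix (Fin m) (Fin m) F))ᵀ := rfl
        rw [hglT]
        calc f A = f (∑ i, ∑ j, A i j • Matrix.vecMulVec ((Pi.single i 1 : Fin l → F)) ((Pi.single j 1 : Fin m → F))) := by
              rw [← hA]
        _ = ∑ i, ∑ j, A i j • f (Matrix.vecMulVec ((Pi.single i 1 : Fin l → F)) ((Pi.single j 1 : Fin m → F))) := by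
              rw [map_sum]
              exact Finset.sum_congr rfl fun i _ => by
                rw [map_sum]
                exact Finset.sum_congr rfl fun j _ => by rw [_root_.map_smul]
        _ = ∑ i, ∑ j, A i j • ((ML : Matrix (Fin l) (Fin l) F) *
              Matrix.vecMulVec ((Pi.single i 1 : Fin l → F)) ((Pi.single j 1 : Fin m → F)) *
              ((MN : Matrix (Fin m) (Fin m) F))ᵀ) :=
              Finset.sum_congr rfl fun i _ => Finset.sum_congr rfl fun j _ => by rw [key]
        _ = (ML : Matrix (Fin l) (Fin l) F) * A * ((MN : Matrix (Fin m) (Fin m) F))ᵀ := by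
              conv_rhs => rw [hA]
              simp only [Matrix.mul_sum, Matrix.sum_mul, Matrix.mul_smul, Matrix.smul_mul]
      · -- transpose form
        have hCT : ∀ u, u ≠ 0 → Col (fun u v => (g u v)ᵀ) u := fun u hu =>
          row_iff_col_transpose.mp (hR u hu)
        obtain ⟨L, N, hLa, hLs, hLk, hNa, hNs, hNk, hrep⟩ := main_col hg.transpose hl2 hm2 hCT
        have hlm : l = m := le_antisymm (finrank_le_of_inj L hLa hLs hLk)
          (finrank_le_of_inj N hNa hNs hNk)
        subst hlm
        obtain ⟨MN, hMN⟩ := to_gl N hNa hNs hNk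
        obtain ⟨ML, hML⟩ := to_gl L hLa hLs hLk
        right
        refine ⟨rfl, MN, glT ML, fun A => ?_⟩
        have hsub : Matrix.submatrix Aᵀ (Fin.cast (rfl : l = l)) (Fin.cast (rfl : l = l).symm) = Aᵀ := by
          ext i j
          rfl
        rw [hsub]
        have key : ∀ u v, f (Matrix.vecMulVec u v) =
            (MN : Matrix (Fin l) (Fin l) F) * (Matrix.vecMulVec u v)ᵀ *
              ((ML : Matrix (Fin l) (Fin l) F))ᵀ := by
          intro u v
          rw [vecMulVec_transpose, mul_vecMulVec_mul, hML, hMN]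
          have h1 : (g u v)ᵀ = Matrix.vecMulVec (L u) (N v) := hrep u v
          have h2 : g u v = (Matrix.vecMulVec (L u) (N v))ᵀ := by
            rw [← h1, Matrix.transpose_transpose]
          rw [vecMulVec_transpose] at h2
          exact h2
        have hglT : (glT ML : Matrix (Fin l) (Fin l) F) = ((ML : Matrix (Fin l) (Fin l) F))ᵀ := rfl
        rw [hglT]
        have hA := eq_sum A
        have hAT : Aᵀ = ∑ i, ∑ j, A i j • Matrix.vecMulVec ((Pi.single j 1 : Fin l → F)) ((Pi.single i 1 : Fin l → F)) := by
          have h1 := congrArg Matrix.transpose hA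
          simpa only [Matrix.transpose_sum, Matrix.transpose_smul, vecMulVec_transpose] using h1
        calc f A = f (∑ i, ∑ j, A i j • Matrix.vecMulVec ((Pi.single i 1 : Fin l → F)) ((Pi.single j 1 : Fin l → F))) := by
              rw [← hA]
        _ = ∑ i, ∑ j, A i j • f (Matrix.vecMulVec ((Pi.single i 1 : Fin l → F)) ((Pi.single j 1 : Fin l → F))) := by
              rw [map_sum]
              exact Finset.sum_congr rfl fun i _ => by
                rw [map_sum]
                exact Finset.sum_congr rfl fun j _ => by rw [_root_.map_smul]
        _ = ∑ i, ∑ j, A i j • ((MN : Matrix (Fin l) (Fin l) F) *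
              Matrix.vecMulVec ((Pi.single j 1 : Fin l → F)) ((Pi.single i 1 : Fin l → F)) *
              ((ML : Matrix (Fin l) (Fin l) F))ᵀ) :=
              Finset.sum_congr rfl fun i _ => Finset.sum_congr rfl fun j _ => by
                rw [key, vecMulVec_transpose]
        _ = (MN : Matrix (Fin l) (Fin l) F) * Aᵀ * ((ML : Matrix (Fin l) (Fin l) F))ᵀ := by
              conv_rhs => rw [hAT]
              simp only [Matrix.mul_sum, Matrix.sum_mul, Matrix.mul_smul, Matrix.smul_mul]
    · -- m = 1
      have hm1 : m = 1 := by omega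
      subst hm1
      left
      set N : (Fin l → F) → (Fin l → F) := fun u i => f (Matrix.vecMulVec u ((fun _ => 1) : Fin 1 → F)) i 0
        with hNdef
      have hNa : ∀ u u', N (u + u') = N u + N u' := by
        intro u u'
        ext i
        simp only [hNdef, vecMulVec_add_left, map_add, Matrix.add_apply, Pi.add_apply]
      have hNs : ∀ (t : F) u, N (t • u) = t • N u := by
        intro t u
        ext i
        simp only [hNdef, vecMulVec_smul_left, _root_.map_smul, Matrix.smul_apply, Pi.smul_apply,
          smul_eq_mul]
      have hNk : ∀ u, N u = 0 → u = 0 := by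
        intro u h0
        have h1 : f (Matrix.vecMulVec u ((fun _ => 1) : Fin 1 → F)) = 0 := by
          ext i j
          have hj : j = 0 := Subsingleton.elim j 0
          subst hj
          exact congrFun h0 i
        have h2 : Matrix.vecMulVec u ((fun _ => 1) : Fin 1 → F) = 0 := by
          apply f.injective
          rw [map_zero]
          exact h1
        rcases vecMulVec_eq_zero_iff.mp h2 with h | h
        · exact h
        · exact absurd (congrFun h 0) one_ne_zero
      obtain ⟨ML, hML⟩ := to_gl N hNa hNs hNk
      refine ⟨ML, 1, fun A => ?_⟩
      have hA : A = Matrix.vecMulVec (fun i => A i 0) ((fun _ => 1) : Fin 1 → F) := by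
        ext i j
        have hj : j = 0 := Subsingleton.elim j 0
        subst hj
        simp [Matrix.vecMulVec_apply]
      rw [Units.val_one, Matrix.mul_one]
      conv_lhs => rw [hA]
      ext i j
      have hj : j = 0 := Subsingleton.elim j 0
      subst hj
      have h3 : f (Matrix.vecMulVec (fun i => A i 0) ((fun _ => 1) : Fin 1 → F)) i 0
          = N (fun i => A i 0) i := rfl
      rw [h3, ← hML]
      simp [Matrix.mul_apply, Matrix.mulVec, dotProduct]
  · -- l = 1
    have hl1 : l = 1 := by omega
    subst hl1
    left
    set N : (Fin m → F) → (Fin m → F) := fun v j => f (Matrix.vecMulVec ((fun _ => 1) : Fin 1 → F) v) 0 j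
      with hNdef
    have hNa : ∀ v v', N (v + v') = N v + N v' := by
      intro v v'
      ext j
      simp only [hNdef, vecMulVec_add_right, map_add, Matrix.add_apply, Pi.add_apply]
    have hNs : ∀ (t : F) v, N (t • v) = t • N v := by
      intro t v
      ext j
      simp only [hNdef, vecMulVec_smul_right, _root_.map_smul, Matrix.smul_apply, Pi.smul_apply,
        smul_eq_mul]
    have hNk : ∀ v, N v = 0 → v = 0 := by
      intro v h0
      have h1 : f (Matrix.vecMulVec ((fun _ => 1) : Fin 1 → F) v) = 0 := by
        ext i j
        have hi : i = 0 := Subsingleton.elim i 0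
        subst hi
        exact congrFun h0 j
      have h2 : Matrix.vecMulVec ((fun _ => 1) : Fin 1 → F) v = 0 := by
        apply f.injective
        rw [map_zero]
        exact h1
      rcases vecMulVec_eq_zero_iff.mp h2 with h | h
      · exact absurd (congrFun h 0) one_ne_zero
      · exact h
    obtain ⟨M0, hM0⟩ := to_gl N hNa hNs hNk
    refine ⟨1, glT M0, fun A => ?_⟩
    have hA : A = Matrix.vecMulVec ((fun _ => 1) : Fin 1 → F) (A 0) := by
      ext i j
      have hi : i = 0 := Subsingleton.elim i 0
      subst hi
      simp [Matrix.vecMulVec_apply]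
    rw [Units.val_one, Matrix.one_mul]
    have hglT : (glT M0 : Matrix (Fin m) (Fin m) F) = ((M0 : Matrix (Fin m) (Fin m) F))ᵀ := rfl
    rw [hglT]
    conv_lhs => rw [hA]
    ext i j
    have hi : i = 0 := Subsingleton.elim i 0
    subst hi
    have h3 : f (Matrix.vecMulVec ((fun _ => 1) : Fin 1 → F) (A 0)) 0 j = N (A 0) j := rfl
    rw [h3, ← hM0]
    simp [Matrix.mul_apply, Matrix.mulVec, dotProduct, Matrix.transpose_apply, mul_comm]
end

section
/- Let F_q be a finite field of characteristic p, and l, m positive integers. Let SLEquivMat denote the group (under composition) of invertible semi-linear rank-preserving maps on F_q^{l×m}, let LEquivMat ≤ SLEquivMat be the subgroup of invertible F_q-linear rank-preserving maps, and let G ≤ SLEquivMat be the subgroup of entrywise Galois maps {A ↦ A^γ : γ ∈ Gal(F_q/F_p)} (γ applied to each entry). Then LEquivMat is normal in SLEquivMat, LEquivMat ∩ G is trivial, and SLEquivMat = LEquivMat·G; that is, SLEquivMat is the internal semidirect product LEquivMat ⋊ Gal(F_q/F_p). -/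
open Matrix

/-- `f` is a semi-linear matrix-equivalence map: an additive automorphism of `F^{l×m}`
which is semi-linear for some `γ ∈ Gal(F/F_p)` and preserves matrix rank. -/
def IsSemilinearMatEquiv {F : Type*} [Field F] {l m : ℕ}
    (f : AddAut (Matrix (Fin l) (Fin m) F)) : Prop :=
  (∃ γ : F ≃+* F, ∀ (c : F) (A : Matrix (Fin l) (Fin m) F), f (c • A) = γ c • f A) ∧
  ∀ A : Matrix (Fin l) (Fin m) F, (f A).rank = A.rank

/-- `f` is a linear matrix-equivalence map: an additive automorphism of `F^{l×m}`
which is `F`-linear and preserves matrix rank. -/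
def IsLinearMatEquiv {F : Type*} [Field F] {l m : ℕ}
    (f : AddAut (Matrix (Fin l) (Fin m) F)) : Prop :=
  (∀ (c : F) (A : Matrix (Fin l) (Fin m) F), f (c • A) = c • f A) ∧
  ∀ A : Matrix (Fin l) (Fin m) F, (f A).rank = A.rank

/-- `f` is the entrywise application of some `γ ∈ Gal(F/F_p)`. -/
def IsGaloisMatMap {F : Type*} [Field F] {l m : ℕ}
    (f : AddAut (Matrix (Fin l) (Fin m) F)) : Prop :=
  ∃ γ : F ≃+* F, ∀ A : Matrix (Fin l) (Fin m) F, f A = A.map γ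

/-- Entrywise application of a field automorphism preserves matrix rank. -/
lemma rank_map_ringEquiv {F : Type*} [Field F] {l m : ℕ}
    (γ : F ≃+* F) (A : Matrix (Fin l) (Fin m) F) :
    (A.map γ).rank = A.rank := by
  classical
  -- entrywise `γ` on vectors
  let e : (Fin l → F) ≃+ (Fin l → F) :=
    { toFun := fun v i => γ (v i)
      invFun := fun v i => γ.symm (v i)
      left_inv := fun v => by ext i; simp
      right_inv := fun v => by ext i; simp
      map_add' := fun v w => by ext i; simp }
  have key : ∀ v : Fin l → F,
      v ∈ LinearMap.range A.mulVecLin ↔ e v ∈ LinearMap.range (A.map γ).mulVecLin := by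
    intro v
    constructor
    · rintro ⟨w, rfl⟩
      refine ⟨fun j => γ (w j), ?_⟩
      ext i
      simp [Matrix.mulVecLin_apply, Matrix.mulVec, dotProduct, e, map_sum]
    · rintro ⟨w, hw⟩
      refine ⟨fun j => γ.symm (w j), ?_⟩
      have : ∀ i, γ (v i) = ∑ j, γ (A i j) * w j := by
        intro i
        have := congrFun hw i
        simpa [Matrix.mulVecLin_apply, Matrix.mulVec, dotProduct, e, Matrix.map] using
          this.symm
      ext i
      apply γ.injective
      simp [Matrix.mulVecLin_apply, Matrix.mulVec, dotProduct, map_sum, this i]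
  let j : LinearMap.range A.mulVecLin ≃+ LinearMap.range (A.map γ).mulVecLin :=
    { toFun := fun x => ⟨e x.1, (key x.1).mp x.2⟩
      invFun := fun x => ⟨e.symm x.1, by
        have := (key (e.symm x.1)).mpr
        simp only [AddEquiv.apply_symm_apply] at this
        exact this x.2⟩
      left_inv := fun x => by ext; simp
      right_inv := fun x => by ext; simp
      map_add' := fun x y => by ext; simp }
  have hrank : Module.rank F (LinearMap.range A.mulVecLin) =
      Module.rank F (LinearMap.range (A.map γ).mulVecLin) := by
    refine rank_eq_of_equiv_equiv (ZeroHom.mk (γ : F → F) (map_zero γ)) j γ.bijective ?_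
    rintro c ⟨x, hx⟩
    ext i
    simp [j, e, _root_.map_mul]
  simp only [Matrix.rank, Module.finrank, hrank]

/-- **`SLEquivMat` is the internal semidirect product `LEquivMat ⋊ Gal(F_q/F_p)`.**
Within the group of semi-linear matrix-equivalence maps of `F^{l×m}`:
the linear ones form a normal subgroup, the entrywise Galois maps intersect it
trivially, and every semi-linear matrix-equivalence map factors as a linear one
followed by a Galois one. -/
theorem slequiv_matrix_semidirect
    (F : Type*) [Field F] [Fintype F] (p : ℕ) [Fact p.Prime] [CharP F p]
    (l m : ℕ) (hl : 0 < l) (hm : 0 < m) :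
    (∀ g n : AddAut (Matrix (Fin l) (Fin m) F), IsSemilinearMatEquiv g → IsLinearMatEquiv n →
        IsLinearMatEquiv (g + n + -g)) ∧
    (∀ f : AddAut (Matrix (Fin l) (Fin m) F), IsLinearMatEquiv f → IsGaloisMatMap f → f = 0) ∧
    (∀ f : AddAut (Matrix (Fin l) (Fin m) F), IsSemilinearMatEquiv f →
        ∃ a b : AddAut (Matrix (Fin l) (Fin m) F),
          IsLinearMatEquiv a ∧ IsGaloisMatMap b ∧ f = a + b) := by
  classical
  refine ⟨?_, ?_, ?_⟩
  · -- normality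
    rintro g n ⟨⟨γ, hγ⟩, hgrank⟩ ⟨hnlin, hnrank⟩
    have hinv_rank : ∀ A : Matrix (Fin l) (Fin m) F, ((-g) A).rank = A.rank := by
      intro A
      have := hgrank ((-g) A)
      simpa using this.symm
    have hinv_smul : ∀ (c : F) (A : Matrix (Fin l) (Fin m) F),
        (-g) (c • A) = γ.symm c • (-g) A := by
      intro c A
      apply g.injective
      rw [hγ, RingEquiv.apply_symm_apply, AddAut.apply_neg_self, AddAut.apply_neg_self]
    constructor
    · intro c A
      show g (n ((-g) (c • A))) = c • g (n ((-g) A))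
      rw [hinv_smul, hnlin, hγ, RingEquiv.apply_symm_apply]
    · intro A
      show (g (n ((-g) A))).rank = A.rank
      rw [hgrank, hnrank, hinv_rank]
  · -- trivial intersection
    rintro f ⟨hlin, -⟩ ⟨γ, hγ⟩
    have hγ_id : ∀ c : F, γ c = c := by
      intro c
      let i : Fin l := ⟨0, hl⟩
      let j : Fin m := ⟨0, hm⟩
      let E : Matrix (Fin l) (Fin m) F := Matrix.single i j 1
      have h1 : f (c • E) = (c • E).map γ := hγ _
      have h2 : f (c • E) = c • E.map γ := by rw [hlin, hγ]
      have := congrFun (congrFun (h1.symm.trans h2) i) j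
      simpa [E, Matrix.map, Matrix.single, Matrix.smul_apply] using this
    refine AddEquiv.ext fun A => ?_
    have := hγ A
    rw [this]
    ext i j
    simp [Matrix.map, hγ_id]
  · -- splitting
    rintro f ⟨⟨γ, hγ⟩, hrank⟩
    let b : AddAut (Matrix (Fin l) (Fin m) F) := AddEquiv.mapMatrix γ.toAddEquiv
    refine ⟨f + -b, b, ⟨?_, ?_⟩, ⟨γ, fun A => rfl⟩, (neg_add_cancel_right f b).symm⟩
    · intro c A
      show f ((-b) (c • A)) = c • f ((-b) A)
      have hbinv : ∀ B : Matrix (Fin l) (Fin m) F, (-b) B = B.map γ.symm := fun _ => rfl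
      have hb : (-b) (c • A) = γ.symm c • (-b) A := by
        rw [hbinv, hbinv]
        ext i j
        exact map_mul (γ.symm : F ≃+* F) c (A i j)
      rw [hb, hγ, RingEquiv.apply_symm_apply]
    · intro A
      show (f ((-b) A)).rank = A.rank
      rw [hrank]
      have : (-b) A = A.map γ.symm := rfl
      rw [this]
      have h2 : (A.map ⇑(γ.symm)).map ⇑γ = A := by
        ext i j; simp [Matrix.map]
      calc (A.map ⇑(γ.symm)).rank = ((A.map ⇑(γ.symm)).map ⇑γ).rank :=
            (rank_map_ringEquiv γ _).symm
        _ = A.rank := by rw [h2]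
end

section
/- Let F_q be a finite field with q elements, K a field extension of F_q of degree m, 1 ≤ k < l ≤ m, and g = (g_1,…,g_l) ∈ K^l a vector whose entries are linearly independent over F_q. Let C_{k,g} ⊆ K^l be the associated Gabidulin code, let W = span_{F_q}{g_1,…,g_l} ⊆ K, and let d be the largest positive integer such that W is a vector space over the subfield F_{q^d} ⊆ K with q^d elements (i.e., W is closed under multiplication by F_{q^d}). Then: (1) d divides gcd(l, m); and (2) for α ∈ K^× and L ∈ GL_l(F_q), the linear rank-metric-equivalence map x ↦ α·(x·L) maps C_{k,g} onto C_{k,g} if and only if there exists β ∈ F_{q^d}^× with g·L = β·g, i.e., if and only if L = M_β, where M_β ∈ GL_l(F_q) is the unique matrix over F_q satisfying g·M_β = β·g. -/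
set_option synthInstance.maxHeartbeats 1000000
set_option maxHeartbeats 1000000

open Matrix
open scoped MatrixGroups

open Polynomial in
lemma gab_fix_card {K : Type*} [Field K] [Fintype K] {q m e : ℕ} (hq : 2 ≤ q)
    (hK : Fintype.card K = q ^ m) (hm0 : 0 < m) (he : e ∣ m) (he0 : 0 < e) :
    Set.ncard {x : K | x ^ q ^ e = x} = q ^ e := by
  classical
  obtain ⟨t, ht⟩ := he
  have hqe : 1 < q ^ e := Nat.one_lt_pow he0.ne' hq
  have hqm : 1 < q ^ m := Nat.one_lt_pow hm0.ne' hq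
  have hbig : (X ^ q ^ m - X : K[X]).roots = Finset.univ.val := by
    rw [← hK]; exact FiniteField.roots_X_pow_card_sub_X K
  have hAB : q ^ e - 1 ∣ q ^ m - 1 := by
    have := Nat.sub_dvd_pow_sub_pow (q ^ e) 1 t
    rwa [one_pow, ← pow_mul, ← ht] at this
  obtain ⟨c, hc⟩ := hAB
  have hdvd : (X ^ q ^ e - X : K[X]) ∣ (X ^ q ^ m - X) := by
    have h1 : (X ^ (q ^ e - 1) - 1 : K[X]) ∣ (X ^ (q ^ m - 1) - 1) := by
      have := sub_dvd_pow_sub_pow (X ^ (q ^ e - 1) : K[X]) 1 c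
      rwa [one_pow, ← pow_mul, ← hc] at this
    have h2 : ∀ N : ℕ, 1 ≤ N → (X ^ N - X : K[X]) = X * (X ^ (N - 1) - 1) := by
      intro N hN
      rw [mul_sub, mul_one, ← pow_succ', Nat.sub_add_cancel hN]
    rw [h2 _ hqe.le, h2 _ hqm.le]
    exact mul_dvd_mul_left _ h1
  have hneM : (X ^ q ^ m - X : K[X]) ≠ 0 := FiniteField.X_pow_card_sub_X_ne_zero K hqm
  have hneE : (X ^ q ^ e - X : K[X]) ≠ 0 := FiniteField.X_pow_card_sub_X_ne_zero K hqe
  have hle : (X ^ q ^ e - X : K[X]).roots ≤ (X ^ q ^ m - X : K[X]).roots :=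
    Polynomial.roots.le_of_dvd hneM hdvd
  have hsplitM : (X ^ q ^ m - X : K[X]).Splits := by
    rw [Polynomial.splits_iff_card_roots, hbig,
      FiniteField.X_pow_card_sub_X_natDegree_eq K hqm]
    simpa using hK
  have hsplitE : (X ^ q ^ e - X : K[X]).Splits :=
    Polynomial.Splits.of_dvd hsplitM hneM hdvd
  have hcard : (X ^ q ^ e - X : K[X]).roots.card = q ^ e := by
    rw [Polynomial.splits_iff_card_roots.mp hsplitE,
      FiniteField.X_pow_card_sub_X_natDegree_eq K hqe]
  have hnodup : (X ^ q ^ e - X : K[X]).roots.Nodup :=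
    Multiset.nodup_of_le (hbig ▸ hle) Finset.univ.nodup
  have hset : {x : K | x ^ q ^ e = x} = ↑(X ^ q ^ e - X : K[X]).roots.toFinset := by
    ext x
    simp [Polynomial.mem_roots hneE, Polynomial.IsRoot.def, sub_eq_zero]
  rw [hset, Set.ncard_coe_finset, Multiset.toFinset_card_of_nodup hnodup, hcard]

open Polynomial in
lemma gab_fix_card_le {K : Type*} [Field K] {N : ℕ} (hN : 1 < N) :
    Set.ncard {x : K | x ^ N = x} ≤ N := by
  classical
  have hne : (X ^ N - X : K[X]) ≠ 0 := FiniteField.X_pow_card_sub_X_ne_zero K hN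
  have hset : {x : K | x ^ N = x} ⊆ ↑(X ^ N - X : K[X]).roots.toFinset := by
    intro x hx
    simp only [Finset.coe_sort_coe, Multiset.mem_toFinset, Finset.mem_coe]
    rw [Polynomial.mem_roots hne]
    simp [Polynomial.IsRoot.def, sub_eq_zero, hx]
    exact hx
  calc Set.ncard {x : K | x ^ N = x} ≤ (X ^ N - X : K[X]).roots.toFinset.card := by
        rw [← Set.ncard_coe_finset]; exact Set.ncard_le_ncard hset (Set.toFinite _)
    _ ≤ (X ^ N - X : K[X]).roots.card := Multiset.toFinset_card_le _
    _ ≤ (X ^ N - X : K[X]).natDegree := Polynomial.card_roots' _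
    _ = N := FiniteField.X_pow_card_sub_X_natDegree_eq K hN

/-- The stabilizer subfield `{β : K | β • W ⊆ W}`. -/
def gabStab {F K : Type*} [Field F] [Field K] [Finite K] [Algebra F K]
    (W : Submodule F K) : Subfield K where
  carrier := {β : K | ∀ w ∈ W, β * w ∈ W}
  mul_mem' := fun {a b} ha hb w hw => by rw [mul_assoc]; exact ha _ (hb w hw)
  one_mem' := fun w hw => by rwa [one_mul]
  add_mem' := fun {a b} ha hb w hw => by
    rw [add_mul]; exact W.add_mem (ha w hw) (hb w hw)
  zero_mem' := fun w hw => by rw [zero_mul]; exact W.zero_mem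
  neg_mem' := fun {a} ha w hw => by rw [neg_mul]; exact W.neg_mem (ha w hw)
  inv_mem' := by
    intro x hx
    rcases eq_or_ne x 0 with rfl | hx0
    · simpa using hx
    · intro w hw
      have hinj : Function.Injective (fun w : ↥W => (⟨x * ↑w, hx _ w.2⟩ : ↥W)) := by
        intro a b hab
        exact Subtype.ext (mul_left_cancel₀ hx0 (congrArg Subtype.val hab))
      obtain ⟨w', hw'⟩ := Finite.surjective_of_injective hinj ⟨w, hw⟩
      have hval : x * ↑w' = w := congrArg Subtype.val hw'
      rw [← hval, inv_mul_cancel_left₀ hx0]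
      exact w'.2

lemma mem_gabStab {F K : Type*} [Field F] [Field K] [Finite K] [Algebra F K]
    {W : Submodule F K} {β : K} : β ∈ gabStab W ↔ ∀ w ∈ W, β * w ∈ W := Iff.rfl

lemma gab_stab_fix {F K : Type*} [Field F] [Fintype F] [Field K] [Fintype K] [Algebra F K]
    {m : ℕ} (hm : Module.finrank F K = m)
    (W : Submodule F K) (d : ℕ) (hd0 : 0 < d) (hdm : d ∣ m)
    (hdW : ∀ β : K, β ^ Fintype.card F ^ d = β → ∀ w ∈ W, β * w ∈ W)
    (hdmax : ∀ d' : ℕ, 0 < d' → d' ∣ m →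
      (∀ β : K, β ^ Fintype.card F ^ d' = β → ∀ w ∈ W, β * w ∈ W) → d' ≤ d) :
    ∀ γ : K, (∀ w ∈ W, γ * w ∈ W) → γ ^ Fintype.card F ^ d = γ := by
  classical
  set q := Fintype.card F with hq
  have hq2 : 2 ≤ q := Fintype.one_lt_card
  haveI : FiniteDimensional F K := Module.Finite.of_finite
  have hm0 : 0 < m := hm ▸ Module.finrank_pos
  have hK : Fintype.card K = q ^ m := by rw [Module.card_eq_pow_finrank (K := F), hm]
  have halg : ∀ x : F, algebraMap F K x ∈ gabStab W := by
    intro x w hw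
    rw [← Algebra.smul_def]
    exact W.smul_mem x hw
  set E : IntermediateField F K := (gabStab W).toIntermediateField halg with hE
  have hmemE : ∀ β : K, β ∈ E ↔ ∀ w ∈ W, β * w ∈ W := fun β => Iff.rfl
  set e := Module.finrank F ↥E with he
  haveI : Fintype ↥E := Fintype.ofFinite _
  have hcardE : Fintype.card ↥E = q ^ e := Module.card_eq_pow_finrank (K := F)
  have hncardE : Set.ncard (E : Set K) = q ^ e := by
    rw [← Nat.card_coe_set_eq]
    simp only [SetLike.coe_sort_coe]
    rw [Nat.card_eq_fintype_card, hcardE]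
  have he0 : 0 < e := he ▸ Module.finrank_pos
  have hedvd : e ∣ m := by
    refine ⟨Module.finrank ↥E K, ?_⟩
    rw [he, ← hm, Module.finrank_mul_finrank]
  have hEfix : (E : Set K) ⊆ {x : K | x ^ q ^ e = x} := by
    intro β hβ
    have hx : (⟨β, hβ⟩ : ↥E) ^ Fintype.card ↥E = ⟨β, hβ⟩ := FiniteField.pow_card _
    have := congrArg Subtype.val hx
    simpa [hcardE] using this
  have hfixE : {x : K | x ^ q ^ e = x} = (E : Set K) := by
    refine (Set.eq_of_subset_of_ncard_le hEfix ?_ (Set.toFinite _)).symm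
    rw [hncardE]
    exact gab_fix_card_le (Nat.one_lt_pow he0.ne' hq2)
  have hed : e ≤ d := by
    refine hdmax e he0 hedvd ?_
    intro β hβ
    have : β ∈ (E : Set K) := hfixE ▸ hβ
    exact (hmemE β).mp this
  have hde : d ≤ e := by
    have hsub : {x : K | x ^ q ^ d = x} ⊆ (E : Set K) := by
      intro β hβ
      exact (hmemE β).mpr (hdW β hβ)
    have h1 : q ^ d ≤ q ^ e := by
      rw [← gab_fix_card hq2 hK hm0 hdm hd0, ← hncardE]
      exact Set.ncard_le_ncard hsub (Set.toFinite _)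
    exact (Nat.pow_le_pow_iff_right hq2).mp h1
  have hde' : d = e := le_antisymm hde hed
  intro γ hγ
  have : γ ∈ (E : Set K) := (hmemE γ).mpr hγ
  rw [hde']
  have h2 : γ ∈ {x : K | x ^ q ^ e = x} := hfixE.symm ▸ this
  exact h2

lemma gab_moore {F K : Type*} [Field F] [Fintype F] [Field K] [Fintype K] [Algebra F K]
    {l n : ℕ} (hn : n ≤ l) (g : Fin l → K) (hg : LinearIndependent F g)
    (c : ℕ → K)
    (hsum : ∑ i ∈ Finset.range n, c i • (fun j => g j ^ Fintype.card F ^ i : Fin l → K) = 0) :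
    ∀ i < n, c i = 0 := by
  classical
  rcases Nat.eq_zero_or_pos n with h0 | hn0
  · omega
  set q := Fintype.card F with hq
  have hq2 : 2 ≤ q := Fintype.one_lt_card
  obtain ⟨p, hpc⟩ := CharP.exists F
  haveI := hpc
  have hp : p.Prime := CharP.char_is_prime F p
  haveI : Fact p.Prime := ⟨hp⟩
  haveI : CharP K p := charP_of_injective_algebraMap (algebraMap F K).injective p
  obtain ⟨a, _, hcard⟩ := FiniteField.card F p
  have hqp : ∀ i : ℕ, q ^ i = p ^ (a * i) := fun i => by
    rw [hq, hcard, ← pow_mul]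
  set P : Polynomial K := ∑ i ∈ Finset.range n, Polynomial.C (c i) * Polynomial.X ^ q ^ i with hP
  have heval : ∀ x : K, P.eval x = ∑ i ∈ Finset.range n, c i * x ^ q ^ i := by
    intro x; rw [hP]; simp [Polynomial.eval_finset_sum]
  have hfrob : ∀ (x y : K) (i : ℕ), (x + y) ^ q ^ i = x ^ q ^ i + y ^ q ^ i := by
    intro x y i; rw [hqp i]; exact add_pow_char_pow ..
  have hW : ∀ x ∈ Submodule.span F (Set.range g), P.eval x = 0 := by
    intro x hx
    induction hx using Submodule.span_induction with
    | mem x hxr =>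
      obtain ⟨j, rfl⟩ := hxr
      rw [heval]
      simpa [Finset.sum_apply] using congrFun hsum j
    | zero =>
      rw [heval]
      have : ∀ i : ℕ, (0 : K) ^ q ^ i = 0 := fun i =>
        zero_pow (pow_ne_zero _ (by omega : q ≠ 0))
      simp [this]
    | add x y _ _ hx hy =>
      rw [heval] at hx hy ⊢
      simp only [hfrob, mul_add, Finset.sum_add_distrib, hx, hy, add_zero]
    | smul t x _ hx =>
      rw [heval] at hx ⊢
      have hts : ∀ i ∈ Finset.range n,
          c i * (t • x) ^ q ^ i = (algebraMap F K t) * (c i * x ^ q ^ i) := by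
        intro i _
        rw [Algebra.smul_def, mul_pow, ← map_pow, FiniteField.pow_card_pow]
        ring
      rw [Finset.sum_congr rfl hts, ← Finset.mul_sum, hx, mul_zero]
  have hPz : P = 0 := by
    by_contra hPne
    have hsub : (Submodule.span F (Set.range g) : Set K) ⊆ ↑P.roots.toFinset := by
      intro x hx
      simp only [Finset.coe_sort_coe, Multiset.mem_toFinset, Finset.mem_coe]
      rw [Polynomial.mem_roots hPne]
      exact hW x hx
    have hdeg : P.natDegree ≤ q ^ (n - 1) := by
      rw [hP]
      refine Polynomial.natDegree_sum_le_of_forall_le _ _ fun i hi => ?_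
      calc (Polynomial.C (c i) * Polynomial.X ^ q ^ i).natDegree
          ≤ (Polynomial.X ^ q ^ i : Polynomial K).natDegree := Polynomial.natDegree_C_mul_le _ _
        _ = q ^ i := Polynomial.natDegree_X_pow _
        _ ≤ q ^ (n - 1) := Nat.pow_le_pow_right (by omega)
            (by have := Finset.mem_range.mp hi; omega)
    have hWcard : Set.ncard (Submodule.span F (Set.range g) : Set K) = q ^ l := by
      haveI : Fintype ↥(Submodule.span F (Set.range g)) := Fintype.ofFinite _
      rw [← Nat.card_coe_set_eq]
      simp only [SetLike.coe_sort_coe]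
      rw [Nat.card_eq_fintype_card, Module.card_eq_pow_finrank (K := F),
        finrank_span_eq_card hg, Fintype.card_fin]
    have hcard2 : q ^ l ≤ q ^ (n - 1) := by
      calc q ^ l = Set.ncard (Submodule.span F (Set.range g) : Set K) := hWcard.symm
        _ ≤ P.roots.toFinset.card := by
            rw [← Set.ncard_coe_finset]; exact Set.ncard_le_ncard hsub (Set.toFinite _)
        _ ≤ P.roots.card := Multiset.toFinset_card_le _
        _ ≤ P.natDegree := Polynomial.card_roots' _
        _ ≤ q ^ (n - 1) := hdeg
    have : l ≤ n - 1 := (Nat.pow_le_pow_iff_right hq2).mp hcard2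
    omega
  intro i hi
  have := congrArg (fun Q => Polynomial.coeff Q (q ^ i)) hPz
  simp only [hP, Polynomial.finset_sum_coeff, Polynomial.coeff_C_mul,
    Polynomial.coeff_X_pow, Polynomial.coeff_zero] at this
  rw [Finset.sum_eq_single i] at this
  · simpa using this
  · intro b _ hbi
    have hne : q ^ i ≠ q ^ b := fun h => hbi (Nat.pow_right_injective hq2 h.symm)
    simp [hne]
  · intro h; exact absurd (Finset.mem_range.mpr hi) h

open Matrix
open scoped MatrixGroups



/-- **The linear rank-metric automorphism group of a Gabidulin code.**
Let `g ∈ K^l` be a Gabidulin vector (entries `F`-linearly independent), `C = C_{k,g}` the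
Gabidulin code spanned over `K` by the rows `(g_j^{q^i})_j`, `0 ≤ i < k`, and let
`W = span_F {g_1, …, g_l}`.  Let `d` be the largest positive integer such that `W` is a
vector space over the subfield `F_{q^d} ⊆ K` (elements of `F_{q^d}` are exactly the
`β ∈ K` with `β^{q^d} = β`).  Then `d ∣ gcd(l, m)`, and a linear rank-metric-equivalence
map `x ↦ α • (x · L)` (`α ∈ K^×`, `L ∈ GL_l(F)`) maps `C` onto `C` if and only if
`g · L = β • g` for some `β ∈ F_{q^d}^×`. -/
theorem gabidulin_rank_metric_automorphisms
    {F K : Type*} [Field F] [Fintype F] [Field K] [Fintype K] [Algebra F K]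
    {m k l : ℕ} (hm : Module.finrank F K = m)
    (hk : 1 ≤ k) (hkl : k < l) (hlm : l ≤ m)
    (g : Fin l → K) (hg : LinearIndependent F g)
    (C : Submodule K (Fin l → K))
    (hC : C = Submodule.span K
      (Set.range fun i : Fin k => fun j => g j ^ Fintype.card F ^ (i : ℕ)))
    (W : Submodule F K) (hW : W = Submodule.span F (Set.range g))
    (d : ℕ) (hd0 : 0 < d) (hdm : d ∣ m)
    (hdW : ∀ β : K, β ^ Fintype.card F ^ d = β → ∀ w ∈ W, β * w ∈ W)
    (hdmax : ∀ d' : ℕ, 0 < d' → d' ∣ m →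
      (∀ β : K, β ^ Fintype.card F ^ d' = β → ∀ w ∈ W, β * w ∈ W) → d' ≤ d) :
    d ∣ Nat.gcd l m ∧
    ∀ (α : Kˣ) (L : GL (Fin l) F),
      ((fun x => (α : K) •
          Matrix.vecMul x ((L : Matrix (Fin l) (Fin l) F).map (algebraMap F K))) ''
            (C : Set (Fin l → K)) = (C : Set (Fin l → K)))
        ↔ ∃ β : K, β ≠ 0 ∧ β ^ Fintype.card F ^ d = β ∧
            Matrix.vecMul g ((L : Matrix (Fin l) (Fin l) F).map (algebraMap F K)) = β • g := by
  classical
  set q := Fintype.card F with hq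
  have hq2 : 2 ≤ q := Fintype.one_lt_card
  haveI : FiniteDimensional F K := Module.Finite.of_finite
  have hm0 : 0 < m := hm ▸ Module.finrank_pos
  have hK : Fintype.card K = q ^ m := by rw [Module.card_eq_pow_finrank (K := F), hm]
  obtain ⟨p, hpc⟩ := CharP.exists F
  haveI := hpc
  have hppr : p.Prime := CharP.char_is_prime F p
  haveI : Fact p.Prime := ⟨hppr⟩
  haveI : CharP K p := charP_of_injective_algebraMap (algebraMap F K).injective p
  obtain ⟨a, _, hcard⟩ := FiniteField.card F p
  have hqp : ∀ i : ℕ, q ^ i = p ^ ((a : ℕ) * i) := fun i => by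
    rw [hq, hcard, ← pow_mul]
  set θ : ℕ → (K →+* K) := fun t => iterateFrobenius K p ((a : ℕ) * t) with hθdef
  have hθ : ∀ (t : ℕ) (x : K), θ t x = x ^ q ^ t := by
    intro t x; rw [hθdef]; simp only [iterateFrobenius_def]; rw [hqp]
  -- Part 1 : d ∣ l
  have hdl : d ∣ l := by
    set Ed : Subfield K := (θ d).eqLocusField (RingHom.id K) with hEd
    have hmemEd : ∀ x : K, x ∈ Ed ↔ x ^ q ^ d = x := by
      intro x
      show θ d x = x ↔ _
      rw [hθ]
    have halgd : ∀ x : F, algebraMap F K x ∈ Ed := by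
      intro x
      rw [hmemEd, ← map_pow, FiniteField.pow_card_pow]
    set E : IntermediateField F K := Ed.toIntermediateField halgd with hE
    have hmemE : ∀ x : K, x ∈ E ↔ x ^ q ^ d = x := hmemEd
    set WE : Submodule ↥E K :=
      { carrier := ↑W
        add_mem' := fun ha hb => W.add_mem ha hb
        zero_mem' := W.zero_mem
        smul_mem' := by
          intro c x hx
          show (c : K) * x ∈ W
          exact hdW (c : K) ((hmemE _).mp c.2) x hx } with hWE
    haveI : Fintype ↥E := Fintype.ofFinite _
    haveI : Fintype ↥WE := Fintype.ofFinite _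
    have hcardEd : Fintype.card ↥E = q ^ d := by
      have h1 : Set.ncard {x : K | x ^ q ^ d = x} = q ^ d :=
        gab_fix_card hq2 hK hm0 hdm hd0
      have h2 : (E : Set K) = {x : K | x ^ q ^ d = x} := by
        ext x; simp only [SetLike.mem_coe, hmemE, Set.mem_setOf_eq]
      rw [← h1, ← h2, ← Nat.card_coe_set_eq]
      simp only [SetLike.coe_sort_coe]
      rw [Nat.card_eq_fintype_card]
    have hcardWE : Fintype.card ↥WE = (q ^ d) ^ Module.finrank ↥E ↥WE := by
      rw [← hcardEd]; exact Module.card_eq_pow_finrank (K := ↥E) (V := ↥WE)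
    have hcardW : Fintype.card ↥WE = q ^ l := by
      have h3 : Fintype.card ↥WE = Fintype.card ↥W := by
        apply Fintype.card_congr
        exact Equiv.subtypeEquivRight fun x => Iff.rfl
      rw [h3]
      have h4 : Fintype.card ↥W = q ^ Module.finrank F ↥W := Module.card_eq_pow_finrank
      rw [h4, hW, finrank_span_eq_card hg, Fintype.card_fin]
    have h5 : q ^ l = q ^ (d * Module.finrank ↥E ↥WE) := by
      rw [← hcardW, hcardWE, ← pow_mul]
    exact ⟨_, Nat.pow_right_injective hq2 h5⟩
  refine ⟨Nat.dvd_gcd hdl hdm, ?_⟩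
  intro α L
  -- setup
  set M : Matrix (Fin l) (Fin l) K :=
    ((L : Matrix (Fin l) (Fin l) F)).map (algebraMap F K) with hM
  set r : ℕ → (Fin l → K) := fun i j => g j ^ q ^ i with hr
  have hMfix : ∀ (t : ℕ) (i j : Fin l), (M i j) ^ q ^ t = M i j := by
    intro t i j
    rw [hM, Matrix.map_apply, ← map_pow, FiniteField.pow_card_pow]
  have hcomm : ∀ (t : ℕ) (x : Fin l → K),
      Matrix.vecMul (fun j => x j ^ q ^ t) M = fun j => Matrix.vecMul x M j ^ q ^ t := by
    intro t x
    funext j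
    simp only [Matrix.vecMul, dotProduct]
    rw [← hθ t, map_sum]
    refine Finset.sum_congr rfl fun s _ => ?_
    rw [map_mul (θ t), hθ, hθ, hMfix]
  set u : Fin l → K := Matrix.vecMul g M with hu
  have hψr : ∀ i : ℕ, Matrix.vecMul (r i) M = fun j => u j ^ q ^ i := by
    intro i
    rw [hu, ← hcomm i g]
  set ψ : (Fin l → K) →ₗ[K] (Fin l → K) := (α : K) • Matrix.vecMulLinear M with hψ
  have hψapp : (fun x => (α : K) • Matrix.vecMul x M) = ⇑ψ := by
    funext x
    simp [hψ, Matrix.vecMulLinear_apply]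
  have hCgen : C = Submodule.span K (Set.range fun i : Fin k => r (i : ℕ)) := hC
  have hmapC : Submodule.map ψ C
      = Submodule.span K (Set.range fun i : Fin k => (α : K) • fun j => u j ^ q ^ (i : ℕ)) := by
    rw [hCgen, Submodule.map_span, ← Set.range_comp]
    have hfun : (⇑ψ ∘ fun i : Fin k => r (i : ℕ))
        = fun i : Fin k => (α : K) • fun j => u j ^ q ^ (i : ℕ) := by
      funext i
      simp only [Function.comp_apply, hψ, LinearMap.smul_apply,
        Matrix.vecMulLinear_apply, hψr]
    rw [hfun]
  constructor
  · -- hard direction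
    intro himg
    rw [hψapp, ← Submodule.map_coe] at himg
    have hCeq : Submodule.map ψ C = C := SetLike.coe_injective himg
    have hCu : C = Submodule.span K
        (Set.range fun i : Fin k => (α : K) • fun j => u j ^ q ^ (i : ℕ)) := by
      rw [← hCeq, hmapC]
    have hθuC : ∀ t : ℕ, t < k → (fun j => u j ^ q ^ t) ∈ C := by
      intro t ht
      have h1 : ((α : K) • fun j => u j ^ q ^ t) ∈ C := by
        rw [hCu]
        exact Submodule.subset_span ⟨⟨t, ht⟩, rfl⟩
      have h2 := C.smul_mem ((α : K)⁻¹) h1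
      rwa [inv_smul_smul₀ α.ne_zero] at h2
    have huC : u ∈ C := by
      have := hθuC 0 (by omega)
      simpa using this
    rw [hCgen] at huC
    obtain ⟨v, hv⟩ := (Submodule.mem_span_range_iff_exists_fun K).mp huC
    set a' : ℕ → K := fun i => if h : i < k then v ⟨i, h⟩ else 0 with ha'
    have hsum0 : ∑ i ∈ Finset.range k, a' i • r i = u := by
      rw [← Fin.sum_univ_eq_sum_range (fun i => a' i • r i) k, ← hv]
      refine Finset.sum_congr rfl fun i _ => ?_
      rw [ha']
      simp [i.isLt]
    have hpowsum : ∀ (t : ℕ) (n : ℕ) (cc : ℕ → K) (x : Fin l → K),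
        (∑ i ∈ Finset.range n, cc i • r i = x) →
        (fun j => x j ^ q ^ t) = ∑ i ∈ Finset.range n, (cc i ^ q ^ t) • r (i + t) := by
      intro t n cc x hx
      funext j
      have hxj : x j = ∑ i ∈ Finset.range n, cc i * g j ^ q ^ i := by
        rw [← hx]; simp [Finset.sum_apply, hr]
      rw [hxj, ← hθ t, map_sum, Finset.sum_apply]
      refine Finset.sum_congr rfl fun i _ => ?_
      rw [map_mul (θ t), hθ, hθ]
      show cc i ^ q ^ t * (g j ^ q ^ i) ^ q ^ t = (cc i ^ q ^ t) • (g j ^ q ^ (i + t))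
      rw [smul_eq_mul, ← pow_mul, ← pow_add]
    have key : ∀ t : ℕ, t ≤ k - 1 → ∀ i : ℕ, k - t ≤ i → i < k → a' i = 0 := by
      intro t
      induction t with
      | zero => intro _ i h1 h2; omega
      | succ t ih =>
        intro hT i h1 h2
        rcases Nat.lt_or_ge i (k - t) with hlt | hge
        · -- i = k - (t+1)
          have hieq : i = k - (t + 1) := by omega
          set T := t + 1 with hTdef
          have hTk : T < k := by omega
          set i0 := k - T with hi0
          have hθT : (fun j => u j ^ q ^ T) ∈ C := hθuC T hTk
          have hlhs := hpowsum T k a' u hsum0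
          have hlhs2 : (fun j => u j ^ q ^ T)
              = ∑ i ∈ Finset.range (i0 + 1), (a' i ^ q ^ T) • r (i + T) := by
            rw [hlhs]
            refine (Finset.sum_subset ?_ ?_).symm
            · exact Finset.range_subset_range.mpr (by omega)
            · intro x hx hxn
              have hx1 : x < k := Finset.mem_range.mp hx
              have hx2 : i0 + 1 ≤ x := by
                by_contra hcon
                exact hxn (Finset.mem_range.mpr (by omega))
              have hz : a' x = 0 := ih (by omega) x (by omega) hx1
              rw [hz, zero_pow (pow_ne_zero _ (by omega : q ≠ 0)), zero_smul]
          rw [hCgen] at hθT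
          obtain ⟨w, hw⟩ := (Submodule.mem_span_range_iff_exists_fun K).mp hθT
          set b' : ℕ → K := fun i => if h : i < k then w ⟨i, h⟩ else 0 with hb'
          have hsumb : ∑ i ∈ Finset.range k, b' i • r i = fun j => u j ^ q ^ T := by
            rw [← Fin.sum_univ_eq_sum_range (fun i => b' i • r i) k, ← hw]
            refine Finset.sum_congr rfl fun i _ => ?_
            rw [hb']
            simp [i.isLt]
          set cc : ℕ → K := fun s =>
            (if T ≤ s then a' (s - T) ^ q ^ T else 0) - (if s < k then b' s else 0) with hcc
          have hc : ∑ s ∈ Finset.range (k + 1), cc s • r s = 0 := by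
            have hsplit : ∀ s, cc s • r s
                = (if T ≤ s then a' (s - T) ^ q ^ T else 0) • r s
                  - (if s < k then b' s else 0) • r s := by
              intro s; rw [hcc, sub_smul]
            simp only [hsplit]
            rw [Finset.sum_sub_distrib]
            have hfirst : ∑ s ∈ Finset.range (k + 1),
                (if T ≤ s then a' (s - T) ^ q ^ T else 0) • r s
                = ∑ i ∈ Finset.range (i0 + 1), (a' i ^ q ^ T) • r (i + T) := by
              have hkT : k + 1 - T = i0 + 1 := by omega
              conv_lhs => rw [Finset.range_eq_Ico]
              rw [← Finset.sum_Ico_consecutive _ (Nat.zero_le T) (by omega : T ≤ k + 1)]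
              have hz : ∑ s ∈ Finset.Ico 0 T,
                  (if T ≤ s then a' (s - T) ^ q ^ T else 0) • r s = 0 := by
                refine Finset.sum_eq_zero fun s hs => ?_
                have hs2 := (Finset.mem_Ico.mp hs).2
                rw [if_neg (by omega), zero_smul]
              rw [hz, zero_add, Finset.sum_Ico_eq_sum_range, hkT]
              refine Finset.sum_congr rfl fun i hi => ?_
              rw [if_pos (by omega : T ≤ T + i), Nat.add_sub_cancel_left, Nat.add_comm T i]
            have hsecond : ∑ s ∈ Finset.range (k + 1),
                (if s < k then b' s else 0) • r s
                = ∑ s ∈ Finset.range k, b' s • r s := by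
              refine (Finset.sum_subset (Finset.range_subset_range.mpr (Nat.le_succ k)) ?_).symm.trans ?_
              · intro x hx hxn
                have : ¬ x < k := fun hcon => hxn (Finset.mem_range.mpr hcon)
                rw [if_neg this, zero_smul]
              · refine Finset.sum_congr rfl fun s hs => ?_
                rw [if_pos (Finset.mem_range.mp hs)]
            rw [hfirst, hsecond, ← hlhs2, hsumb, sub_self]
          have hcz := gab_moore (by omega : k + 1 ≤ l) g hg cc hc
          have hck := hcz k (by omega)
          rw [hcc] at hck
          simp only [if_pos (by omega : T ≤ k), if_neg (by omega : ¬ k < k), sub_zero] at hck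
          have : a' (k - T) = 0 := by
            exact pow_eq_zero_iff (pow_ne_zero _ (by omega : q ≠ 0)) |>.mp hck
          rwa [hieq]
        · exact ih (by omega) i hge h2
    have hzero : ∀ i : ℕ, 1 ≤ i → i < k → a' i = 0 := by
      intro i h1 h2
      exact key (k - 1) (le_refl _) i (by omega) h2
    have hug : u = a' 0 • g := by
      rw [← hsum0]
      rw [Finset.sum_eq_single_of_mem 0 (Finset.mem_range.mpr (by omega))]
      · congr 1
        funext j
        rw [hr]
        simp
      · intro i hi hi0
        rw [hzero i (by omega) (Finset.mem_range.mp hi), zero_smul]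
    set γ := a' 0 with hγ
    have hγ0 : γ ≠ 0 := by
      intro hz
      have hu0 : u = 0 := by rw [hug, hz, zero_smul]
      have hg0 : g = 0 := by
        have h1 : Matrix.vecMul u (((L⁻¹ : GL (Fin l) F) :
            Matrix (Fin l) (Fin l) F).map (algebraMap F K)) = g := by
          rw [hu, Matrix.vecMul_vecMul, hM, ← Matrix.map_mul]
          have : ((L : Matrix (Fin l) (Fin l) F) *
              ((L⁻¹ : GL (Fin l) F) : Matrix (Fin l) (Fin l) F)) = 1 :=
            Units.mul_inv L
          rw [this, Matrix.map_one _ (map_zero _) (map_one _), Matrix.vecMul_one]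
        rw [hu0, Matrix.zero_vecMul] at h1
        exact h1.symm
      exact hg.ne_zero ⟨0, by omega⟩ (by rw [hg0]; rfl)
    have hγW : ∀ w ∈ W, γ * w ∈ W := by
      have hgW : ∀ j, g j ∈ W := by
        intro j; rw [hW]; exact Submodule.subset_span ⟨j, rfl⟩
      have huW : ∀ j, u j ∈ W := by
        intro j
        rw [hu]
        show ∑ s, g s * M s j ∈ W
        refine W.sum_mem fun s _ => ?_
        rw [hM, Matrix.map_apply, mul_comm, ← Algebra.smul_def]
        exact W.smul_mem _ (hgW s)
      intro w hw
      rw [hW] at hw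
      induction hw using Submodule.span_induction with
      | mem x hx =>
        obtain ⟨j, rfl⟩ := hx
        have : γ * g j = u j := by rw [hug]; rfl
        rw [this]
        exact huW j
      | zero => rw [mul_zero]; exact W.zero_mem
      | add x y _ _ hx hy => rw [mul_add]; exact W.add_mem hx hy
      | smul c x _ hx => rw [mul_smul_comm]; exact W.smul_mem c hx
    refine ⟨γ, hγ0, gab_stab_fix hm W d hd0 hdm hdW hdmax γ hγW, hug⟩
  · -- easy direction
    rintro ⟨β, hβ0, _, hβ⟩
    rw [hψapp, ← Submodule.map_coe]
    congr 1
    rw [hmapC, hCgen]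
    have hgen : ∀ i : Fin k, ((α : K) • fun j => u j ^ q ^ (i : ℕ))
        = ((α : K) * β ^ q ^ (i : ℕ)) • r (i : ℕ) := by
      intro i
      funext j
      have : u j = β * g j := by
        have h0 := congrFun hβ j
        rwa [Pi.smul_apply, smul_eq_mul] at h0
      show (α : K) * (u j ^ q ^ (i : ℕ)) = ((α : K) * β ^ q ^ (i : ℕ)) * (g j ^ q ^ (i : ℕ))
      rw [this, mul_pow, mul_assoc]
    simp only [hgen]
    refine le_antisymm (Submodule.span_le.mpr ?_) (Submodule.span_le.mpr ?_)
    · rintro x ⟨i, rfl⟩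
      exact Submodule.smul_mem _ _ (Submodule.subset_span ⟨i, rfl⟩)
    · rintro x ⟨i, rfl⟩
      have hne : ((α : K) * β ^ q ^ (i : ℕ)) ≠ 0 :=
        mul_ne_zero α.ne_zero (pow_ne_zero _ hβ0)
      have hmem : ((α : K) * β ^ q ^ (i : ℕ)) • r (i : ℕ) ∈ Submodule.span K
          (Set.range fun i : Fin k => ((α : K) * β ^ q ^ (i : ℕ)) • r (i : ℕ)) :=
        Submodule.subset_span ⟨i, rfl⟩
      have h2 := Submodule.smul_mem _ (((α : K) * β ^ q ^ (i : ℕ))⁻¹) hmem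
      rw [inv_smul_smul₀ hne] at h2
      exact h2
end
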